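/- arXiv:1905.00364 — 5 statements merged into one kernel-verified Lean document; each statement's English description precedes it below -/
import Mathlib

section
/- If the populations of a PMA are laminar and the minimum-target populations form a union of pairwise-disjoint chains, then the Algorithm 2 choice function satisfies the law of aggregate demand: |Ch(C \ {c})| ≤ |Ch(C)| for all C and c ∈ C; moreover if c ∈ Ch(C) then Ch(C \ {c}) equals either Ch(C) \ {c} or (Ch(C) \ {c}) ∪ {d} for a single candidate d. -/
/-! Shared definitions: PMA choice functions (greedy max-quota, Algorithm 1, Algorithm 2),
laminarity, deferred acceptance, and stability notions. -/

namespace PMA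

variable {α : Type*} [DecidableEq α]

/-- A population constraint: a set of candidates together with a bound
(a maximum quota or a minimum target, depending on context). -/
abbrev Pop (α : Type*) := Finset α × ℕ

/-- A set `S` respects all maximum quotas. -/
def Feasible (maxQ : List (Pop α)) (S : Finset α) : Prop :=
  ∀ q ∈ maxQ, (S ∩ q.1).card ≤ q.2

instance (maxQ : List (Pop α)) (S : Finset α) : Decidable (Feasible maxQ S) :=
  List.decidableBAll _ _

/-- Greedy pass: traverse candidates in the given order, accepting each candidate
whose addition violates no maximum quota. -/
def pass2 (maxQ : List (Pop α)) : List α → Finset α → Finset α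
  | [], S => S
  | c :: rest, S =>
      if Feasible maxQ (insert c S) then pass2 maxQ rest (insert c S)
      else pass2 maxQ rest S

/-- Candidate `c` belongs to some population whose minimum target is not yet met by `S`. -/
def HelpsMin (minT : List (Pop α)) (S : Finset α) (c : α) : Prop :=
  ∃ p ∈ minT, c ∈ p.1 ∧ (S ∩ p.1).card < p.2

instance (minT : List (Pop α)) (S : Finset α) (c : α) : Decidable (HelpsMin minT S c) :=
  List.decidableBEx _ _

/-- First pass of Algorithm 1: traverse candidates in order, accepting (subject to
maximum quotas) those who help meet some unmet minimum target. -/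
def pass1 (maxQ minT : List (Pop α)) : List α → Finset α → Finset α
  | [], S => S
  | c :: rest, S =>
      if HelpsMin minT S c ∧ Feasible maxQ (insert c S) then
        pass1 maxQ minT rest (insert c S)
      else pass1 maxQ minT rest S

/-- Algorithm 1 choice function: two passes over the candidates of `C`,
in the priority order given by the list `order`. -/
def choice1 (maxQ minT : List (Pop α)) (order : List α) (C : Finset α) : Finset α :=
  pass2 maxQ (order.filter fun c => decide (c ∈ C))
    (pass1 maxQ minT (order.filter fun c => decide (c ∈ C)) ∅)

/-- The greedy max-quota choice function (no minimum targets), with the priority order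
given by the linear order on candidates. -/
def greedy [LinearOrder α] (maxQ : List (Pop α)) (C : Finset α) : Finset α :=
  pass2 maxQ (C.sort (· ≤ ·)) ∅

/-- The greedy max-quota choice function with an explicit priority list. -/
def greedyL (maxQ : List (Pop α)) (order : List α) (C : Finset α) : Finset α :=
  pass2 maxQ (order.filter fun c => decide (c ∈ C)) ∅

/-- The number of populations with a minimum target not yet met by `S` to which `c` belongs. -/
def nUnmet (minT : List (Pop α)) (S : Finset α) (c : α) : ℕ :=
  (minT.filter fun p => decide (c ∈ p.1 ∧ (S ∩ p.1).card < p.2)).length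

/-- The candidates of `R` maximizing the number of unmet minimum targets they help. -/
def bestSet [LinearOrder α] (minT : List (Pop α)) (S R : Finset α) : Finset α :=
  R.filter fun c => ∀ d ∈ R, nUnmet minT S d ≤ nUnmet minT S c

lemma bestSet_nonempty [LinearOrder α] (minT : List (Pop α)) (S : Finset α) {R : Finset α}
    (hR : R.Nonempty) : (bestSet minT S R).Nonempty := by
  obtain ⟨b, hb, hmax⟩ := R.exists_max_image (nUnmet minT S) hR
  exact ⟨b, Finset.mem_filter.mpr ⟨hb, hmax⟩⟩

/-- The next candidate processed by Algorithm 2: among `R`, maximize the number of unmet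
minimum targets helped, breaking ties by the priority order. -/
def pick [LinearOrder α] (minT : List (Pop α)) (S : Finset α) {R : Finset α}
    (hR : R.Nonempty) : α :=
  (bestSet minT S R).min' (bestSet_nonempty minT S hR)

lemma pick_mem [LinearOrder α] (minT : List (Pop α)) (S : Finset α) {R : Finset α}
    (hR : R.Nonempty) : pick minT S hR ∈ R :=
  Finset.filter_subset _ _ (Finset.min'_mem _ _)

/-- Main loop of Algorithm 2: `R` is the set of unprocessed candidates, `S` the chosen set. -/
def choice2Go [LinearOrder α] (maxQ minT : List (Pop α)) (R S : Finset α) : Finset α :=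
  if hR : R.Nonempty then
    choice2Go maxQ minT (R.erase (pick minT S hR))
      (if Feasible maxQ (insert (pick minT S hR) S) then insert (pick minT S hR) S else S)
  else S
  termination_by R.card
  decreasing_by exact Finset.card_erase_lt_of_mem (pick_mem minT S hR)

/-- Algorithm 2 choice function. -/
def choice2 [LinearOrder α] (maxQ minT : List (Pop α)) (C : Finset α) : Finset α :=
  choice2Go maxQ minT C ∅

/-- A family of populations is laminar: any two are disjoint or nested. -/
def Laminar (pops : List (Pop α)) : Prop :=
  ∀ p ∈ pops, ∀ q ∈ pops, Disjoint p.1 q.1 ∨ p.1 ⊆ q.1 ∨ q.1 ⊆ p.1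

/-- The sets of the populations carrying a positive minimum target. -/
def minTargetSets (minT : List (Pop α)) : Set (Finset α) :=
  {P | ∃ t, (P, t) ∈ minT ∧ 0 < t}

/-- A family of sets is a union of pairwise-disjoint chains: it can be partitioned into
subfamilies, each totally ordered by inclusion, with sets in different subfamilies disjoint. -/
def UnionOfDisjointChains (F : Set (Finset α)) : Prop :=
  ∃ Part : Set (Set (Finset α)), ⋃₀ Part = F ∧ (∀ c ∈ Part, IsChain (· ⊆ ·) c) ∧
    Part.Pairwise fun c c' => ∀ P ∈ c, ∀ Q ∈ c', Disjoint P Q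

section DA

variable {β : Type*} [Fintype α] [DecidableEq β]

/-- The institution to which candidate `c` currently applies: the most-preferred institution
on her list that has not yet rejected her (`none` if her list is exhausted). -/
def applyTo (prefs : α → List β) (rej : α → Finset β) (c : α) : Option β :=
  (prefs c).find? fun m => decide (m ∉ rej c)

/-- The set of candidates currently applying to institution `m`. -/
def applicants (prefs : α → List β) (rej : α → Finset β) (m : β) : Finset α :=
  Finset.univ.filter fun c => applyTo prefs rej c = some m

/-- One round of candidate-proposing deferred acceptance: each candidate applies to her
most-preferred not-yet-rejecting institution; each institution keeps its choice from its
applicants and rejects the rest. `rej c` is the set of institutions that have rejected `c`. -/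
def daRound (Ch : β → Finset α → Finset α) (prefs : α → List β) (rej : α → Finset β) :
    α → Finset β := fun c =>
  match applyTo prefs rej c with
  | none => rej c
  | some m => if c ∈ Ch m (applicants prefs rej m) then rej c else insert m (rej c)

variable [Fintype β]

/-- The rejection sets at the end of candidate-proposing deferred acceptance (running enough
rounds to guarantee that a fixed point, i.e. a round with no rejections, has been reached). -/
def daRej (Ch : β → Finset α → Finset α) (prefs : α → List β) : α → Finset β :=
  (daRound Ch prefs)^[Fintype.card α * Fintype.card β + 1] fun _ => ∅

/-- The matching produced by candidate-proposing deferred acceptance. -/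
def daMatch (Ch : β → Finset α → Finset α) (prefs : α → List β) : α → Option β :=
  applyTo prefs (daRej Ch prefs)

end DA

section Stability

variable {β : Type*} [DecidableEq β]

/-- Candidate `c` strictly prefers institution `m` to the assignment `o`
(being unmatched, `none`, is worse than any institution on her list). -/
def Prefers (prefs : α → List β) (c : α) (m : β) : Option β → Prop
  | none => m ∈ prefs c
  | some m' => m ∈ prefs c ∧ (prefs c).idxOf m < (prefs c).idxOf m'

/-- Candidate `c` weakly prefers assignment `o` to assignment `o'`. -/
def WeaklyPrefers (prefs : α → List β) (c : α) (o o' : Option β) : Prop :=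
  o = o' ∨ ∃ m, o = some m ∧ Prefers prefs c m o'

variable [Fintype α]

/-- The set of candidates assigned to institution `m` by the matching `M`. -/
def assignedTo (M : α → Option β) (m : β) : Finset α :=
  Finset.univ.filter fun c => M c = some m

/-- Individual rationality: candidates are matched only to listed institutions, and each
institution chooses all candidates assigned to it. -/
def IndivRational (Ch : β → Finset α → Finset α) (prefs : α → List β) (M : α → Option β) :
    Prop :=
  (∀ c m, M c = some m → m ∈ prefs c) ∧ ∀ m, Ch m (assignedTo M m) = assignedTo M m

/-- `(c, m)` is a blocking pair for the matching `M`. -/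
def Blocks (Ch : β → Finset α → Finset α) (prefs : α → List β) (M : α → Option β)
    (c : α) (m : β) : Prop :=
  Prefers prefs c m (M c) ∧ c ∈ Ch m (insert c (assignedTo M m))

/-- Stability: individual rationality plus no blocking pairs. -/
def StableMatching (Ch : β → Finset α → Finset α) (prefs : α → List β) (M : α → Option β) :
    Prop :=
  IndivRational Ch prefs M ∧ ∀ c m, ¬ Blocks Ch prefs M c m

/-- One step of the candidate-Pareto-improvement stage: a blocking pair `(m, c)` such that
`c` can be added to `m` without rejecting anyone is resolved by assigning `c` to `m`. -/
def ParetoStep [DecidableEq α] (Ch : β → Finset α → Finset α) (prefs : α → List β)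
    (M M' : α → Option β) : Prop :=
  ∃ m c, Prefers prefs c m (M c) ∧
    Ch m (insert c (assignedTo M m)) = insert c (assignedTo M m) ∧
    M' = Function.update M c (some m)

end Stability

end PMA


open PMA

namespace PMA14

open PMA

variable {α : Type*} [DecidableEq α] [LinearOrder α]

set_option linter.unusedSectionVars false

/-! ### Generic helpers -/

lemma sum_map_add (l : List β) (f g : β → ℕ) :
    (l.map fun b => f b + g b).sum = (l.map f).sum + (l.map g).sum := by
  induction l with
  | nil => simp
  | cons a l ih => simp [ih]; omega

lemma length_filter_le_of_imp (l : List β) (p q : β → Bool) (h : ∀ a ∈ l, p a → q a) :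
    (l.filter p).length ≤ (l.filter q).length := by
  induction l with
  | nil => simp
  | cons a l ih =>
    have ih' := ih fun a ha => h a (List.mem_cons_of_mem _ ha)
    by_cases hp : p a
    · have hq : q a := h a (List.mem_cons_self) hp
      simpa [hp, hq] using ih'
    · by_cases hq : q a <;> simp [hp, hq] <;> omega

lemma length_filter_congr (l : List β) (p q : β → Bool) (h : ∀ a ∈ l, p a = q a) :
    (l.filter p).length = (l.filter q).length := by
  induction l with
  | nil => simp
  | cons a l ih =>
    have ih' := ih fun a ha => h a (List.mem_cons_of_mem _ ha)
    have := h a (List.mem_cons_self)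
    by_cases hp : p a
    · simp [hp, ← this, ih']
    · simp [hp, ← this, ih']

lemma length_filter_eq_sum (l : List β) (p : β → Bool) :
    (l.filter p).length = (l.map fun b => if p b then 1 else 0).sum := by
  induction l with
  | nil => simp
  | cons a l ih => by_cases hp : p a <;> simp [hp, ih] <;> omega

/-! ### cov, candidates, optimality -/

/-- Total satisfied minimum-target coverage. -/
def cov (minT : List (Pop α)) (T : Finset α) : ℕ :=
  (minT.map fun p => min (T ∩ p.1).card p.2).sum

/-- Candidate sets for the optimization problem with base `S` and pool `R`. -/
def Cand (maxQ : List (Pop α)) (S R T : Finset α) : Prop :=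
  S ⊆ T ∧ T ⊆ S ∪ R ∧ Feasible maxQ T

/-- `W` is the canonical optimum: maximal coverage, then maximal cardinality,
then lexicographically least. -/
def IsOpt (maxQ minT : List (Pop α)) (S R W : Finset α) : Prop :=
  Cand maxQ S R W ∧
    (∀ T, Cand maxQ S R T →
      cov minT T < cov minT W ∨ (cov minT T = cov minT W ∧ T.card ≤ W.card)) ∧
    (∀ T, Cand maxQ S R T → cov minT T = cov minT W → T.card = W.card → T ≠ W →
      ∃ m, m ∈ W ∧ m ∉ T ∧ ∀ b, b < m → (b ∈ T ↔ b ∈ W))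

lemma cov_mono (minT : List (Pop α)) {T T' : Finset α} (h : T ⊆ T') :
    cov minT T ≤ cov minT T' := by
  unfold cov
  induction minT with
  | nil => simp
  | cons p l ih =>
    simp only [List.map_cons, List.sum_cons]
    have : (T ∩ p.1).card ≤ (T' ∩ p.1).card :=
      Finset.card_le_card (Finset.inter_subset_inter_right h)
    have h1 : min (T ∩ p.1).card p.2 ≤ min (T' ∩ p.1).card p.2 := by omega
    omega

lemma isOpt_unique {maxQ minT : List (Pop α)} {S R T W : Finset α}
    (hT : IsOpt maxQ minT S R T) (hW : IsOpt maxQ minT S R W) : T = W := by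
  obtain ⟨hTc, hT2, hT3⟩ := hT
  obtain ⟨hWc, hW2, hW3⟩ := hW
  rcases hT2 W hWc with h1 | ⟨hcov1, hcard1⟩
  · rcases hW2 T hTc with h2 | ⟨hcov2, _⟩ <;> omega
  rcases hW2 T hTc with h2 | ⟨hcov2, hcard2⟩
  · omega
  by_contra hne
  obtain ⟨m, hmW, hmT, hagree⟩ := hW3 T hTc hcov2 (by omega) hne
  obtain ⟨m', hm'T, hm'W, hagree'⟩ := hT3 W hWc hcov1 (by omega) (Ne.symm hne)
  rcases lt_trichotomy m m' with h | h | h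
  · exact hmT ((hagree' m h).mp hmW)
  · exact hmT (h ▸ hm'T)
  · exact hm'W ((hagree m' h).mp hm'T)

/-! ### Algorithm basics -/

variable {maxQ minT : List (Pop α)}

lemma choice2Go_nonempty {R S : Finset α} (hR : R.Nonempty) :
    choice2Go maxQ minT R S = choice2Go maxQ minT (R.erase (pick minT S hR))
      (if Feasible maxQ (insert (pick minT S hR) S) then insert (pick minT S hR) S else S) := by
  rw [choice2Go, dif_pos hR]

lemma choice2Go_empty {R S : Finset α} (hR : ¬ R.Nonempty) :
    choice2Go maxQ minT R S = S := by
  rw [choice2Go, dif_neg hR]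

lemma nUnmet_le_pick {R S : Finset α} (hR : R.Nonempty) {d : α} (hd : d ∈ R) :
    nUnmet minT S d ≤ nUnmet minT S (pick minT S hR) := by
  have h := Finset.min'_mem (bestSet minT S R) (bestSet_nonempty minT S hR)
  simp only [bestSet, Finset.mem_filter] at h
  exact h.2 d hd

lemma pick_le {R S : Finset α} (hR : R.Nonempty) {z : α} (hz : z ∈ R)
    (h : nUnmet minT S (pick minT S hR) ≤ nUnmet minT S z) :
    pick minT S hR ≤ z := by
  apply Finset.min'_le
  simp only [bestSet, Finset.mem_filter]
  exact ⟨hz, fun d hd => le_trans (nUnmet_le_pick hR hd) h⟩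

lemma subset_choice2Go (maxQ minT : List (Pop α)) :
    ∀ (R S : Finset α), S ⊆ choice2Go maxQ minT R S := by
  intro R
  induction R using Finset.strongInductionOn with
  | _ R ih =>
    intro S
    by_cases hR : R.Nonempty
    · rw [choice2Go_nonempty hR]
      refine subset_trans ?_ (ih _ (Finset.erase_ssubset (pick_mem minT S hR)) _)
      split
      · exact Finset.subset_insert _ _
      · exact subset_rfl
    · rw [choice2Go_empty hR]

lemma choice2Go_subset (maxQ minT : List (Pop α)) :
    ∀ (R S : Finset α), choice2Go maxQ minT R S ⊆ S ∪ R := by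
  intro R
  induction R using Finset.strongInductionOn with
  | _ R ih =>
    intro S
    by_cases hR : R.Nonempty
    · rw [choice2Go_nonempty hR]
      refine subset_trans (ih _ (Finset.erase_ssubset (pick_mem minT S hR)) _) ?_
      intro a ha
      rcases Finset.mem_union.mp ha with h | h
      · split at h
        · rcases Finset.mem_insert.mp h with rfl | h
          · exact Finset.mem_union_right _ (pick_mem minT S hR)
          · exact Finset.mem_union_left _ h
        · exact Finset.mem_union_left _ h
      · exact Finset.mem_union_right _ (Finset.erase_subset _ _ h)
    · rw [choice2Go_empty hR]; exact Finset.subset_union_left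

lemma feasible_choice2Go (maxQ minT : List (Pop α)) :
    ∀ (R S : Finset α), Feasible maxQ S → Feasible maxQ (choice2Go maxQ minT R S) := by
  intro R
  induction R using Finset.strongInductionOn with
  | _ R ih =>
    intro S hS
    by_cases hR : R.Nonempty
    · rw [choice2Go_nonempty hR]
      refine ih _ (Finset.erase_ssubset (pick_mem minT S hR)) _ ?_
      split
      · assumption
      · exact hS
    · rwa [choice2Go_empty hR]

lemma not_mem_of_infeasible_insert {S T : Finset α} {x : α}
    (hx : ¬ Feasible maxQ (insert x S)) (hST : S ⊆ T) (hT : Feasible maxQ T) : x ∉ T := by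
  intro hxT
  rw [Feasible] at hx
  push_neg at hx
  obtain ⟨q, hq, hcard⟩ := hx
  exact absurd (hT q hq)
    (not_le.mpr (lt_of_lt_of_le hcard (Finset.card_le_card
      (Finset.inter_subset_inter_right (Finset.insert_subset hxT hST)))))

lemma union_insert_erase {S R : Finset α} {x : α} (hx : x ∈ R) :
    S ∪ R = insert x S ∪ R.erase x := by
  ext a
  simp only [Finset.mem_union, Finset.mem_insert, Finset.mem_erase]
  constructor
  · rintro (h | h)
    · exact Or.inl (Or.inr h)
    · by_cases hax : a = x
      · exact Or.inl (Or.inl hax)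
      · exact Or.inr ⟨hax, h⟩
  · rintro ((rfl | h) | ⟨_, h⟩)
    · exact Or.inr hx
    · exact Or.inl h
    · exact Or.inr h

lemma cand_insert_iff {S R T : Finset α} {x : α} (hx : x ∈ R) (hxS : x ∉ S) :
    (Cand maxQ S R T ∧ x ∈ T) ↔ Cand maxQ (insert x S) (R.erase x) T := by
  constructor
  · rintro ⟨⟨h1, h2, h3⟩, hxT⟩
    exact ⟨Finset.insert_subset hxT h1, (union_insert_erase hx) ▸ h2, h3⟩
  · rintro ⟨h1, h2, h3⟩
    have hxT : x ∈ T := h1 (Finset.mem_insert_self _ _)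
    exact ⟨⟨subset_trans (Finset.subset_insert _ _) h1, (union_insert_erase hx).symm ▸ h2, h3⟩, hxT⟩

lemma cand_erase_iff {S R T : Finset α} {x : α} (hx : x ∈ R) :
    (Cand maxQ S R T ∧ x ∉ T) ↔ (Cand maxQ S (R.erase x) T ∧ x ∉ T) := by
  constructor
  · rintro ⟨⟨h1, h2, h3⟩, hxT⟩
    refine ⟨⟨h1, fun a ha => ?_, h3⟩, hxT⟩
    rcases Finset.mem_union.mp (h2 ha) with h | h
    · exact Finset.mem_union_left _ h
    · exact Finset.mem_union_right _ (Finset.mem_erase.mpr ⟨fun hax => hxT (hax ▸ ha), h⟩)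
  · rintro ⟨⟨h1, h2, h3⟩, hxT⟩
    exact ⟨⟨h1, subset_trans h2 (Finset.union_subset_union_right (Finset.erase_subset _ _)), h3⟩, hxT⟩

/-! ### Indicator sums and swap arithmetic -/

/-- Indicator-sum over a list of populations. -/
def icnt (l : List (Pop α)) (P : Pop α → Prop) [DecidablePred P] : ℕ :=
  (l.map fun p => if P p then 1 else 0).sum

lemma icnt_le {l : List (Pop α)} {P Q : Pop α → Prop} [DecidablePred P] [DecidablePred Q]
    (h : ∀ p ∈ l, P p → Q p) : icnt l P ≤ icnt l Q := by
  unfold icnt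
  induction l with
  | nil => simp
  | cons a l ih =>
    simp only [List.map_cons, List.sum_cons]
    have h1 := ih fun p hp => h p (List.mem_cons_of_mem _ hp)
    have h2 := h a (List.mem_cons_self)
    by_cases hP : P a
    · simp [hP, h2 hP]; omega
    · simp only [if_neg hP]; split <;> omega

lemma icnt_congr {l : List (Pop α)} {P Q : Pop α → Prop} [DecidablePred P] [DecidablePred Q]
    (h : ∀ p ∈ l, P p ↔ Q p) : icnt l P = icnt l Q :=
  le_antisymm (icnt_le fun p hp => (h p hp).mp) (icnt_le fun p hp => (h p hp).mpr)

lemma icnt_split (l : List (Pop α)) (P Q : Pop α → Prop) [DecidablePred P] [DecidablePred Q] :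
    icnt l P = icnt l (fun p => P p ∧ Q p) + icnt l (fun p => P p ∧ ¬ Q p) := by
  unfold icnt
  rw [← sum_map_add]
  apply congrArg
  apply List.map_congr_left
  intro p _
  by_cases hP : P p <;> by_cases hQ : Q p <;> simp [hP, hQ]

lemma nUnmet_eq_icnt (minT : List (Pop α)) (S : Finset α) (x : α) :
    nUnmet minT S x = icnt minT (fun p => x ∈ p.1 ∧ (S ∩ p.1).card < p.2) := by
  unfold nUnmet icnt
  induction minT with
  | nil => simp
  | cons a l ih =>
    rw [List.filter_cons, List.map_cons, List.sum_cons, ← ih]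
    by_cases h : x ∈ a.1 ∧ (S ∩ a.1).card < a.2
    · rw [if_pos (by simpa using h), if_pos h, List.length_cons]
      omega
    · rw [if_neg (by simpa using h), if_neg h]
      omega

lemma card_inter_swap {T : Finset α} {x z : α} (hxT : x ∉ T) (hzT : z ∈ T) (P : Finset α) :
    ((insert x (T.erase z)) ∩ P).card + (if z ∈ P then 1 else 0) =
      (T ∩ P).card + (if x ∈ P then 1 else 0) := by
  have herase : (T.erase z) ∩ P = (T ∩ P).erase z := Finset.erase_inter z T P
  by_cases hxP : x ∈ P
  · rw [Finset.insert_inter_of_mem hxP, herase]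
    have hxi : x ∉ (T ∩ P).erase z :=
      fun h => hxT (Finset.mem_inter.mp (Finset.mem_of_mem_erase h)).1
    rw [Finset.card_insert_of_notMem hxi]
    by_cases hzP : z ∈ P
    · have hz : z ∈ T ∩ P := Finset.mem_inter.mpr ⟨hzT, hzP⟩
      rw [Finset.card_erase_of_mem hz]
      have hpos : 1 ≤ (T ∩ P).card := Finset.card_pos.mpr ⟨z, hz⟩
      simp only [if_pos hzP, if_pos hxP]
      omega
    · rw [Finset.erase_eq_of_notMem (fun h => hzP (Finset.mem_inter.mp h).2)]
      simp [hzP, hxP]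
  · rw [Finset.insert_inter_of_notMem hxP, herase]
    by_cases hzP : z ∈ P
    · have hz : z ∈ T ∩ P := Finset.mem_inter.mpr ⟨hzT, hzP⟩
      rw [Finset.card_erase_of_mem hz]
      have : 1 ≤ (T ∩ P).card := Finset.card_pos.mpr ⟨z, hz⟩
      simp [hzP, hxP]
      omega
    · rw [Finset.erase_eq_of_notMem (fun h => hzP (Finset.mem_inter.mp h).2)]
      simp [hzP, hxP]

lemma laminar_comparable {pops : List (Pop α)} (h : Laminar pops) {p q : Pop α}
    (hp : p ∈ pops) (hq : q ∈ pops) {a : α} (hap : a ∈ p.1) (haq : a ∈ q.1) :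
    p.1 ⊆ q.1 ∨ q.1 ⊆ p.1 := by
  rcases h p hp q hq with hd | h' | h'
  · exact absurd (Finset.mem_inter.mpr ⟨hap, haq⟩)
      (by rw [Finset.disjoint_iff_inter_eq_empty] at hd; simp [hd])
  · exact Or.inl h'
  · exact Or.inr h'

/-- The coverage change under swapping `z` out and `x` in. -/
lemma cov_swap {T : Finset α} {x z : α} (hxT : x ∉ T) (hzT : z ∈ T) (minT : List (Pop α)) :
    cov minT (insert x (T.erase z)) +
      icnt minT (fun p => z ∈ p.1 ∧ x ∉ p.1 ∧ (T ∩ p.1).card ≤ p.2) =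
    cov minT T + icnt minT (fun p => x ∈ p.1 ∧ z ∉ p.1 ∧ (T ∩ p.1).card < p.2) := by
  unfold cov icnt
  rw [← sum_map_add, ← sum_map_add]
  apply congrArg
  apply List.map_congr_left
  intro p _
  have hcs := card_inter_swap hxT hzT p.1
  by_cases hx : x ∈ p.1 <;> by_cases hz : z ∈ p.1 <;>
    simp only [hx, hz, if_true, if_false, true_and, false_and, not_true, not_false_iff,
      and_true, and_false, if_pos, if_neg] <;>
    simp only [hx, hz, if_true, if_false] at hcs <;>
    rw [Nat.min_def, Nat.min_def] <;> split_ifs <;> omega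

/-! ### Small helpers for CRUX -/

lemma exists_min_list {β : Type*} {l : List β} (hl : l ≠ []) (f : β → ℕ) :
    ∃ b ∈ l, ∀ a ∈ l, f b ≤ f a := by
  induction l with
  | nil => exact absurd rfl hl
  | cons a l ih =>
    rcases eq_or_ne l [] with rfl | hl'
    · exact ⟨a, List.mem_cons_self, by simp⟩
    · obtain ⟨b, hb, hmin⟩ := ih hl'
      by_cases h : f a ≤ f b
      · refine ⟨a, List.mem_cons_self, fun c hc => ?_⟩
        rcases List.mem_cons.mp hc with rfl | hc
        · exact le_rfl
        · exact le_trans h (hmin c hc)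
      · refine ⟨b, List.mem_cons_of_mem _ hb, fun c hc => ?_⟩
        rcases List.mem_cons.mp hc with rfl | hc
        · exact le_of_lt (lt_of_not_ge h)
        · exact hmin c hc

lemma icnt_pos {l : List (Pop α)} {P : Pop α → Prop} [DecidablePred P] {p : Pop α}
    (hp : p ∈ l) (hP : P p) : 1 ≤ icnt l P := by
  unfold icnt
  induction l with
  | nil => simp at hp
  | cons a l ih =>
    simp only [List.map_cons, List.sum_cons]
    rcases List.mem_cons.mp hp with rfl | hp'
    · simp [hP]
    · have := ih hp'
      omega

lemma exists_new_elem {S T P : Finset α} (hST : S ⊆ T)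
    (h : (S ∩ P).card < (T ∩ P).card) : ∃ w, w ∈ T ∧ w ∉ S ∧ w ∈ P := by
  by_contra hcon
  push_neg at hcon
  have hsub : T ∩ P ⊆ S ∩ P := by
    intro a ha
    rw [Finset.mem_inter] at ha ⊢
    exact ⟨by_contra fun hs => (hcon a ha.1 hs) ha.2, ha.2⟩
  exact absurd (Finset.card_le_card hsub) (not_le.mpr h)

/-! ### CRUX: the greedy pick belongs to every optimum -/

lemma crux (hlam : Laminar (maxQ ++ minT)) {S R T : Finset α} {x : α}
    (hxR : x ∈ R)
    (hmax : ∀ d ∈ R, nUnmet minT S d ≤ nUnmet minT S x)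
    (htie : ∀ z ∈ R, nUnmet minT S x ≤ nUnmet minT S z → x ≤ z)
    (hfxS : Feasible maxQ (insert x S))
    (hT : Cand maxQ S R T) (hxT : x ∉ T) :
    ∃ T', Cand maxQ S R T' ∧ x ∈ T' ∧ cov minT T ≤ cov minT T' ∧
      (T'.card = T.card + 1 ∨ (T'.card = T.card ∧
        (cov minT T = cov minT T' →
          ∃ z, z ∈ T ∧ z ∉ T' ∧ x < z ∧ T' = insert x (T.erase z)))) := by
  obtain ⟨hST, hTSR, hTfeas⟩ := hT
  have hxS : x ∉ S := fun h => hxT (hST h)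
  by_cases hfeas : Feasible maxQ (insert x T)
  · -- just insert x
    refine ⟨insert x T, ⟨subset_trans hST (Finset.subset_insert _ _),
      Finset.insert_subset (Finset.mem_union_right _ hxR) hTSR, hfeas⟩,
      Finset.mem_insert_self _ _,
      cov_mono minT (Finset.subset_insert _ _), Or.inl (Finset.card_insert_of_notMem hxT)⟩
  · -- swap construction
    -- tight populations containing x
    have htight : ∃ q₀ ∈ maxQ, x ∈ q₀.1 ∧ q₀.2 ≤ (T ∩ q₀.1).card := by
      rw [Feasible] at hfeas
      push_neg at hfeas
      obtain ⟨q, hq, hcard⟩ := hfeas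
      have hxq : x ∈ q.1 := by
        by_contra hxq
        rw [Finset.insert_inter_of_notMem hxq] at hcard
        exact absurd (hTfeas q hq) (not_le.mpr hcard)
      rw [Finset.insert_inter_of_mem hxq,
        Finset.card_insert_of_notMem (fun h => hxT (Finset.mem_inter.mp h).1)] at hcard
      exact ⟨q, hq, hxq, by omega⟩
    set tights := maxQ.filter (fun q => decide (x ∈ q.1 ∧ q.2 ≤ (T ∩ q.1).card)) with htdef
    have htne : tights ≠ [] := by
      obtain ⟨q₀, hq₀, hx₀, hc₀⟩ := htight
      intro hnil
      have : q₀ ∈ tights := List.mem_filter.mpr ⟨hq₀, by simp [hx₀, hc₀]⟩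
      rw [hnil] at this; simp at this
    obtain ⟨qs, hqs_mem, hqs_min⟩ := exists_min_list htne (fun q => q.1.card)
    have hqs := List.mem_filter.mp hqs_mem
    have hqsQ : qs ∈ maxQ := hqs.1
    have hqs2 : x ∈ qs.1 ∧ qs.2 ≤ (T ∩ qs.1).card := by simpa using hqs.2
    -- minimality: any tight pop containing x includes qs
    have hmin : ∀ q ∈ maxQ, x ∈ q.1 → q.2 ≤ (T ∩ q.1).card → qs.1 ⊆ q.1 := by
      intro q hq hxq hcq
      have hqt : q ∈ tights := List.mem_filter.mpr ⟨hq, by simp [hxq, hcq]⟩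
      have hcard := hqs_min q hqt
      rcases laminar_comparable hlam (List.mem_append_left _ hqsQ) (List.mem_append_left _ hq)
        hqs2.1 hxq with h | h
      · exact h
      · rw [Finset.eq_of_subset_of_card_le h hcard]
    -- q* is not saturated by S + x
    have hSqs : (S ∩ qs.1).card < qs.2 := by
      have := hfxS qs hqsQ
      rw [Finset.insert_inter_of_mem hqs2.1,
        Finset.card_insert_of_notMem (fun h => hxS (Finset.mem_inter.mp h).1)] at this
      omega
    -- pick z₀ in (T \ S) ∩ qs maximizing overlap with x's chain
    have hZ : ∃ z, z ∈ T ∧ z ∉ S ∧ z ∈ qs.1 := by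
      refine exists_new_elem hST (lt_of_lt_of_le hSqs hqs2.2)
    set Zset := (T \ S) ∩ qs.1 with hZdef
    have hZne : Zset.Nonempty := by
      obtain ⟨z, h1, h2, h3⟩ := hZ
      exact ⟨z, Finset.mem_inter.mpr ⟨Finset.mem_sdiff.mpr ⟨h1, h2⟩, h3⟩⟩
    obtain ⟨z₀, hz₀Z, hz₀max⟩ := Finset.exists_max_image Zset
      (fun z => icnt minT (fun p => x ∈ p.1 ∧ z ∈ p.1)) hZne
    have hz₀T : z₀ ∈ T := (Finset.mem_sdiff.mp (Finset.mem_inter.mp hz₀Z).1).1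
    have hz₀S : z₀ ∉ S := (Finset.mem_sdiff.mp (Finset.mem_inter.mp hz₀Z).1).2
    have hz₀qs : z₀ ∈ qs.1 := (Finset.mem_inter.mp hz₀Z).2
    have hz₀R : z₀ ∈ R := by
      rcases Finset.mem_union.mp (hTSR hz₀T) with h | h
      · exact absurd h hz₀S
      · exact h
    have hxz₀ : x ≠ z₀ := fun h => hxT (h ▸ hz₀T)
    set T' := insert x (T.erase z₀) with hT'def
    have hxTe : x ∉ T.erase z₀ := fun h => hxT (Finset.mem_of_mem_erase h)
    have hcardT' : T'.card = T.card := by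
      rw [hT'def, Finset.card_insert_of_notMem hxTe, Finset.card_erase_of_mem hz₀T]
      have : 1 ≤ T.card := Finset.card_pos.mpr ⟨z₀, hz₀T⟩
      omega
    -- feasibility of T'
    have hT'feas : Feasible maxQ T' := by
      intro q hq
      have hcs := card_inter_swap hxT hz₀T q.1
      rw [← hT'def] at hcs
      by_cases hxq : x ∈ q.1
      · by_cases hzq : z₀ ∈ q.1
        · simp only [if_pos hxq, if_pos hzq] at hcs
          have := hTfeas q hq
          omega
        · -- q ⊊ qs, so q is not tight
          have hnt : (T ∩ q.1).card < q.2 := by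
            by_contra hcon
            push_neg at hcon
            exact hzq (hmin q hq hxq hcon hz₀qs)
          simp only [if_pos hxq, if_neg hzq] at hcs
          omega
      · have := hTfeas q hq
        by_cases hzq : z₀ ∈ q.1 <;> simp only [if_neg hxq, if_pos, if_neg, hzq] at hcs <;>
          [skip; skip] <;> omega
    -- candidate
    have hT'c : Cand maxQ S R T' := by
      refine ⟨?_, ?_, hT'feas⟩
      · intro a ha
        exact Finset.mem_insert_of_mem (Finset.mem_erase.mpr ⟨fun h => hz₀S (h ▸ ha), hST ha⟩)
      · intro a ha
        rcases Finset.mem_insert.mp ha with rfl | h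
        · exact Finset.mem_union_right _ hxR
        · exact hTSR (Finset.mem_of_mem_erase h)
    -- coverage accounting
    have hcovsw := cov_swap hxT hz₀T minT
    rw [← hT'def] at hcovsw
    set G := icnt minT (fun p => x ∈ p.1 ∧ z₀ ∉ p.1 ∧ (T ∩ p.1).card < p.2) with hGdef
    set L := icnt minT (fun p => z₀ ∈ p.1 ∧ x ∉ p.1 ∧ (T ∩ p.1).card ≤ p.2) with hLdef
    set gS := icnt minT (fun p => x ∈ p.1 ∧ z₀ ∉ p.1 ∧ (S ∩ p.1).card < p.2) with hgdef
    set lS := icnt minT (fun p => z₀ ∈ p.1 ∧ x ∉ p.1 ∧ (S ∩ p.1).card < p.2) with hldef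
    -- G = gS (no newly-filled x-populations avoiding z₀)
    have hGg : G = gS := by
      apply icnt_congr
      intro p hp
      constructor
      · rintro ⟨h1, h2, h3⟩
        refine ⟨h1, h2, lt_of_le_of_lt (Finset.card_le_card
          (Finset.inter_subset_inter_right hST)) h3⟩
      · rintro ⟨h1, h2, h3⟩
        refine ⟨h1, h2, ?_⟩
        by_contra hcon
        push_neg at hcon
        obtain ⟨w, hwT, hwS, hwp⟩ := exists_new_elem hST (lt_of_lt_of_le h3 hcon)
        -- p ⊆ qs since p and qs both contain x, and qs ⊆ p would force z₀ ∈ p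
        have hpqs : p.1 ⊆ qs.1 := by
          rcases laminar_comparable hlam (List.mem_append_right _ hp)
            (List.mem_append_left _ hqsQ) h1 hqs2.1 with h | h
          · exact h
          · exact absurd (h hz₀qs) h2
        have hwZ : w ∈ Zset := Finset.mem_inter.mpr
          ⟨Finset.mem_sdiff.mpr ⟨hwT, hwS⟩, hpqs hwp⟩
        -- m(w) > m(z₀): contradiction with maximality
        have hlt : icnt minT (fun p' => x ∈ p'.1 ∧ z₀ ∈ p'.1) <
            icnt minT (fun p' => x ∈ p'.1 ∧ w ∈ p'.1) := by
          have hsplit := icnt_split minT (fun p' => x ∈ p'.1 ∧ w ∈ p'.1)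
            (fun p' => z₀ ∈ p'.1)
          have h1' : icnt minT (fun p' => x ∈ p'.1 ∧ z₀ ∈ p'.1) ≤
              icnt minT (fun p' => (x ∈ p'.1 ∧ w ∈ p'.1) ∧ z₀ ∈ p'.1) := by
            apply icnt_le
            rintro p' hp' ⟨ha, hb⟩
            have hwp' : w ∈ p'.1 := by
              rcases laminar_comparable hlam (List.mem_append_right _ hp')
                (List.mem_append_right _ hp) ha h1 with h | h
              · exact absurd (h hb) h2
              · exact h hwp
            exact ⟨⟨ha, hwp'⟩, hb⟩
          have h2' : 1 ≤ icnt minT (fun p' => (x ∈ p'.1 ∧ w ∈ p'.1) ∧ z₀ ∉ p'.1) :=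
            icnt_pos hp ⟨⟨h1, hwp⟩, h2⟩
          omega
        exact absurd (hz₀max w hwZ) (not_le.mpr hlt)
    -- L ≤ lS
    have hLl : L ≤ lS := by
      apply icnt_le
      rintro p hp ⟨h1, h2, h3⟩
      refine ⟨h1, h2, ?_⟩
      have : S ∩ p.1 ⊂ T ∩ p.1 := by
        refine Finset.ssubset_iff_of_subset (Finset.inter_subset_inter_right hST) |>.mpr
          ⟨z₀, Finset.mem_inter.mpr ⟨hz₀T, h1⟩, fun h => hz₀S (Finset.mem_inter.mp h).1⟩
      have := Finset.card_lt_card this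
      omega
    -- gS ≥ lS from the priority of x
    have hgl : lS ≤ gS := by
      have hx' := nUnmet_eq_icnt minT S x
      have hz' := nUnmet_eq_icnt minT S z₀
      have hsx := icnt_split minT (fun p => x ∈ p.1 ∧ (S ∩ p.1).card < p.2)
        (fun p => z₀ ∈ p.1)
      have hsz := icnt_split minT (fun p => z₀ ∈ p.1 ∧ (S ∩ p.1).card < p.2)
        (fun p => x ∈ p.1)
      have hcong1 : icnt minT (fun p => (x ∈ p.1 ∧ (S ∩ p.1).card < p.2) ∧ ¬ z₀ ∈ p.1) = gS := by
        apply icnt_congr; intro p _; constructor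
        · rintro ⟨⟨a, b⟩, c⟩; exact ⟨a, c, b⟩
        · rintro ⟨a, b, c⟩; exact ⟨⟨a, c⟩, b⟩
      have hcong2 : icnt minT (fun p => (z₀ ∈ p.1 ∧ (S ∩ p.1).card < p.2) ∧ ¬ x ∈ p.1) = lS := by
        apply icnt_congr; intro p _; constructor
        · rintro ⟨⟨a, b⟩, c⟩; exact ⟨a, c, b⟩
        · rintro ⟨a, b, c⟩; exact ⟨⟨a, c⟩, b⟩
      have hcong3 : icnt minT (fun p => (x ∈ p.1 ∧ (S ∩ p.1).card < p.2) ∧ z₀ ∈ p.1) =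
          icnt minT (fun p => (z₀ ∈ p.1 ∧ (S ∩ p.1).card < p.2) ∧ x ∈ p.1) := by
        apply icnt_congr; intro p _; constructor
        · rintro ⟨⟨a, b⟩, c⟩; exact ⟨⟨c, b⟩, a⟩
        · rintro ⟨⟨a, b⟩, c⟩; exact ⟨⟨c, b⟩, a⟩
      have hmx := hmax z₀ hz₀R
      omega
    refine ⟨T', hT'c, Finset.mem_insert_self _ _, by omega, Or.inr ⟨hcardT', ?_⟩⟩
    intro hcoveq
    have hGL : G = L := by omega
    have hall : nUnmet minT S x = nUnmet minT S z₀ := by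
      have hx' := nUnmet_eq_icnt minT S x
      have hz' := nUnmet_eq_icnt minT S z₀
      have hsx := icnt_split minT (fun p => x ∈ p.1 ∧ (S ∩ p.1).card < p.2)
        (fun p => z₀ ∈ p.1)
      have hsz := icnt_split minT (fun p => z₀ ∈ p.1 ∧ (S ∩ p.1).card < p.2)
        (fun p => x ∈ p.1)
      have hcong1 : icnt minT (fun p => (x ∈ p.1 ∧ (S ∩ p.1).card < p.2) ∧ ¬ z₀ ∈ p.1) = gS := by
        apply icnt_congr; intro p _; constructor
        · rintro ⟨⟨a, b⟩, c⟩; exact ⟨a, c, b⟩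
        · rintro ⟨a, b, c⟩; exact ⟨⟨a, c⟩, b⟩
      have hcong2 : icnt minT (fun p => (z₀ ∈ p.1 ∧ (S ∩ p.1).card < p.2) ∧ ¬ x ∈ p.1) = lS := by
        apply icnt_congr; intro p _; constructor
        · rintro ⟨⟨a, b⟩, c⟩; exact ⟨a, c, b⟩
        · rintro ⟨a, b, c⟩; exact ⟨⟨a, c⟩, b⟩
      have hcong3 : icnt minT (fun p => (x ∈ p.1 ∧ (S ∩ p.1).card < p.2) ∧ z₀ ∈ p.1) =
          icnt minT (fun p => (z₀ ∈ p.1 ∧ (S ∩ p.1).card < p.2) ∧ x ∈ p.1) := by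
        apply icnt_congr; intro p _; constructor
        · rintro ⟨⟨a, b⟩, c⟩; exact ⟨⟨c, b⟩, a⟩
        · rintro ⟨⟨a, b⟩, c⟩; exact ⟨⟨c, b⟩, a⟩
      have hmx := hmax z₀ hz₀R
      omega
    have hxlt : x < z₀ := lt_of_le_of_ne (htie z₀ hz₀R (le_of_eq hall)) hxz₀
    exact ⟨z₀, hz₀T, fun h => (Finset.mem_insert.mp h).elim (fun he => hxz₀ he.symm)
      (fun he => (Finset.mem_erase.mp he).1 rfl), hxlt, rfl⟩

/-! ### Characterization: the algorithm computes the canonical optimum -/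

theorem char (hlam : Laminar (maxQ ++ minT)) :
    ∀ (R S : Finset α), Feasible maxQ S →
      IsOpt maxQ minT S R (choice2Go maxQ minT R S) := by
  intro R
  induction R using Finset.strongInductionOn with
  | _ R ih =>
    intro S hS
    by_cases hR : R.Nonempty
    · set x := pick minT S hR with hxdef
      have hxR : x ∈ R := pick_mem minT S hR
      have herase : R.erase x ⊂ R := Finset.erase_ssubset hxR
      by_cases hxS : x ∈ S
      · -- x already in S: step is a no-op on the state
        have hins : insert x S = S := Finset.insert_eq_self.mpr hxS
        have heq : choice2Go maxQ minT R S = choice2Go maxQ minT (R.erase x) S := by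
          rw [choice2Go_nonempty hR, ← hxdef, hins, if_pos hS]
        rw [heq]
        obtain ⟨hWc, hW2, hW3⟩ := ih _ herase S hS
        have hcand : ∀ T, Cand maxQ S R T ↔ Cand maxQ S (R.erase x) T := by
          intro T
          have hU : S ∪ R = S ∪ R.erase x := by
            ext a
            simp only [Finset.mem_union, Finset.mem_erase]
            constructor
            · rintro (h | h)
              · exact Or.inl h
              · by_cases hax : a = x
                · exact Or.inl (hax ▸ hxS)
                · exact Or.inr ⟨hax, h⟩
            · rintro (h | ⟨_, h⟩)
              · exact Or.inl h
              · exact Or.inr h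
          unfold Cand
          rw [hU]
        exact ⟨(hcand _).mpr hWc, fun T hT => hW2 T ((hcand T).mp hT),
          fun T hT => hW3 T ((hcand T).mp hT)⟩
      · by_cases hfeas : Feasible maxQ (insert x S)
        · -- accept x
          have heq : choice2Go maxQ minT R S =
              choice2Go maxQ minT (R.erase x) (insert x S) := by
            rw [choice2Go_nonempty hR, ← hxdef, if_pos hfeas]
          rw [heq]
          obtain ⟨hWc, hW2, hW3⟩ := ih _ herase (insert x S) hfeas
          set W := choice2Go maxQ minT (R.erase x) (insert x S) with hWdef
          have hxW : x ∈ W := hWc.1 (Finset.mem_insert_self _ _)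
          have hWcand : Cand maxQ S R W :=
            ((cand_insert_iff hxR hxS).mpr hWc).1
          have hmax : ∀ d ∈ R, nUnmet minT S d ≤ nUnmet minT S x :=
            fun d hd => nUnmet_le_pick hR hd
          have htie : ∀ z ∈ R, nUnmet minT S x ≤ nUnmet minT S z → x ≤ z :=
            fun z hz h => pick_le hR hz h
          refine ⟨hWcand, ?_, ?_⟩
          · -- optimality of the key
            intro T hT
            by_cases hxT : x ∈ T
            · exact hW2 T ((cand_insert_iff hxR hxS).mp ⟨hT, hxT⟩)
            · obtain ⟨T', hT'c, hxT', hcov, hstruct⟩ :=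
                crux hlam hxR hmax htie hfeas hT hxT
              have hcard' : T.card ≤ T'.card := by
                rcases hstruct with h | ⟨h, _⟩ <;> omega
              have h2 := hW2 T' ((cand_insert_iff hxR hxS).mp ⟨hT'c, hxT'⟩)
              rcases h2 with h2 | ⟨h2a, h2b⟩
              · rcases lt_or_eq_of_le hcov with h | h
                · exact Or.inl (lt_trans h h2)
                · exact Or.inl (h ▸ h2)
              · rcases lt_or_eq_of_le hcov with h | h
                · exact Or.inl (h2a ▸ h)
                · exact Or.inr ⟨h ▸ h2a, le_trans hcard' h2b⟩
          · -- lexicographic minimality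
            intro T hT hcovT hcardT hne
            by_cases hxT : x ∈ T
            · exact hW3 T ((cand_insert_iff hxR hxS).mp ⟨hT, hxT⟩) hcovT hcardT hne
            · obtain ⟨T', hT'c, hxT', hcov, hstruct⟩ :=
                crux hlam hxR hmax htie hfeas hT hxT
              have hT'cand := (cand_insert_iff hxR hxS).mp ⟨hT'c, hxT'⟩
              have h2 := hW2 T' hT'cand
              have hcovT' : cov minT T' = cov minT W := by
                rcases h2 with h2 | ⟨h2a, _⟩ <;> omega
              have hcardT' : T'.card = W.card := by
                have hcard1 : T'.card ≤ W.card := by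
                  rcases h2 with h2 | ⟨_, h2b⟩
                  · omega
                  · exact h2b
                rcases hstruct with h | ⟨h, _⟩
                · omega
                · omega
              have hcovTT' : cov minT T = cov minT T' := by omega
              rcases hstruct with h | ⟨hcardeq, hz⟩
              · omega
              obtain ⟨z, hzT, hzT', hxz, hT'eq⟩ := hz hcovTT'
              by_cases hT'W : T' = W
              · refine ⟨x, hxW, hxT, fun b hb => ?_⟩
                rw [← hT'W, hT'eq]
                have hbx : b ≠ x := ne_of_lt hb
                have hbz : b ≠ z := ne_of_lt (lt_trans hb hxz)
                simp only [Finset.mem_insert, Finset.mem_erase]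
                constructor
                · intro h; exact Or.inr ⟨hbz, h⟩
                · rintro (h | ⟨_, h⟩)
                  · exact absurd h hbx
                  · exact h
              · obtain ⟨m, hmW, hmT', hagree⟩ := hW3 T' hT'cand hcovT' hcardT' hT'W
                rcases le_or_gt x m with hxm | hmx
                · refine ⟨x, hxW, hxT, fun b hb => ?_⟩
                  have hbT' : b ∈ T ↔ b ∈ T' := by
                    rw [hT'eq]
                    have hbx : b ≠ x := ne_of_lt hb
                    have hbz : b ≠ z := ne_of_lt (lt_trans hb hxz)
                    simp only [Finset.mem_insert, Finset.mem_erase]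
                    constructor
                    · intro h; exact Or.inr ⟨hbz, h⟩
                    · rintro (h | ⟨_, h⟩)
                      · exact absurd h hbx
                      · exact h
                  rcases lt_or_eq_of_le hxm with h | h
                  · rw [hbT']; exact hagree b (lt_trans hb h)
                  · rw [hbT']; exact hagree b (h ▸ hb)
                · refine ⟨m, hmW, fun hmT => ?_, fun b hb => ?_⟩
                  · apply hmT'
                    rw [hT'eq]
                    exact Finset.mem_insert_of_mem (Finset.mem_erase.mpr
                      ⟨ne_of_lt (lt_trans hmx hxz), hmT⟩)
                  · have hbT' : b ∈ T ↔ b ∈ T' := by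
                      rw [hT'eq]
                      have hbx : b ≠ x := ne_of_lt (lt_trans hb hmx)
                      have hbz : b ≠ z := ne_of_lt (lt_trans (lt_trans hb hmx) hxz)
                      simp only [Finset.mem_insert, Finset.mem_erase]
                      constructor
                      · intro h; exact Or.inr ⟨hbz, h⟩
                      · rintro (h | ⟨_, h⟩)
                        · exact absurd h hbx
                        · exact h
                    rw [hbT']
                    exact hagree b hb
        · -- reject x
          have heq : choice2Go maxQ minT R S = choice2Go maxQ minT (R.erase x) S := by
            rw [choice2Go_nonempty hR, ← hxdef, if_neg hfeas]
          rw [heq]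
          obtain ⟨hWc, hW2, hW3⟩ := ih _ herase S hS
          have hnotx : ∀ T, Cand maxQ S R T → x ∉ T := by
            intro T hT
            exact not_mem_of_infeasible_insert hfeas hT.1 hT.2.2
          refine ⟨⟨hWc.1, subset_trans hWc.2.1
            (Finset.union_subset_union_right (Finset.erase_subset _ _)), hWc.2.2⟩, ?_, ?_⟩
          · intro T hT
            exact hW2 T (((cand_erase_iff hxR).mp ⟨hT, hnotx T hT⟩).1)
          · intro T hT
            exact hW3 T (((cand_erase_iff hxR).mp ⟨hT, hnotx T hT⟩).1)
    · rw [choice2Go_empty hR]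
      have hcand : ∀ T, Cand maxQ S R T → T = S := by
        intro T hT
        rw [Finset.not_nonempty_iff_eq_empty] at hR
        refine subset_antisymm ?_ hT.1
        simpa [hR] using hT.2.1
      refine ⟨⟨subset_rfl, Finset.subset_union_left, hS⟩, ?_, ?_⟩
      · intro T hT
        rw [hcand T hT]
        exact Or.inr ⟨rfl, le_rfl⟩
      · intro T hT _ _ hne
        exact absurd (hcand T hT) hne

/-! ### Exchange lemma helpers -/

lemma sum_map_le {β : Type*} (l : List β) (f g : β → ℕ) (h : ∀ b ∈ l, f b ≤ g b) :
    (l.map f).sum ≤ (l.map g).sum := by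
  induction l with
  | nil => simp
  | cons a l ih =>
    simp only [List.map_cons, List.sum_cons]
    have h1 := h a (List.mem_cons_self)
    have h2 := ih fun b hb => h b (List.mem_cons_of_mem _ hb)
    omega

lemma exists_max_list {β : Type*} {l : List β} (hl : l ≠ []) (f : β → ℕ) :
    ∃ b ∈ l, ∀ a ∈ l, f a ≤ f b := by
  induction l with
  | nil => exact absurd rfl hl
  | cons a l ih =>
    rcases eq_or_ne l [] with rfl | hl'
    · exact ⟨a, List.mem_cons_self, by simp⟩
    · obtain ⟨b, hb, hmax⟩ := ih hl'
      by_cases h : f b ≤ f a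
      · refine ⟨a, List.mem_cons_self, fun c hc => ?_⟩
        rcases List.mem_cons.mp hc with rfl | hc
        · exact le_rfl
        · exact le_trans (hmax c hc) h
      · refine ⟨b, List.mem_cons_of_mem _ hb, fun c hc => ?_⟩
        rcases List.mem_cons.mp hc with rfl | hc
        · exact le_of_lt (lt_of_not_ge h)
        · exact hmax c hc

lemma card_inter_sdiff_add (T T' P : Finset α) :
    ((T \ T') ∩ P).card + ((T ∩ T') ∩ P).card = (T ∩ P).card := by
  rw [← Finset.card_union_of_disjoint]
  · congr 1
    ext a
    simp only [Finset.mem_union, Finset.mem_inter, Finset.mem_sdiff]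
    tauto
  · rw [Finset.disjoint_left]
    intro a ha hb
    simp only [Finset.mem_inter, Finset.mem_sdiff] at ha hb
    exact ha.1.2 hb.1.2

lemma card_inter_split {U P X : Finset α} (hUP : U ⊆ P) :
    (X ∩ P).card = (X ∩ U).card + (X ∩ (P \ U)).card := by
  rw [← Finset.card_union_of_disjoint]
  · congr 1
    ext a
    simp only [Finset.mem_union, Finset.mem_inter, Finset.mem_sdiff]
    constructor
    · rintro ⟨h1, h2⟩
      by_cases h : a ∈ U
      · exact Or.inl ⟨h1, h⟩
      · exact Or.inr ⟨h1, h2, h⟩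
    · rintro (⟨h1, h2⟩ | ⟨h1, h2, _⟩)
      · exact ⟨h1, hUP h2⟩
      · exact ⟨h1, h2⟩
  · rw [Finset.disjoint_left]
    intro a ha hb
    simp only [Finset.mem_inter, Finset.mem_sdiff] at ha hb
    exact hb.2.2 ha.2

/-! ### The exchange lemma -/

set_option maxHeartbeats 2000000 in
lemma exch (hlam : Laminar (maxQ ++ minT)) {T T' : Finset α} {w : α}
    (hTf : Feasible maxQ T) (hT'f : Feasible maxQ T') (hwT : w ∈ T) (hwT' : w ∉ T') :
    (Feasible maxQ (insert w T') ∧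
      cov minT T + cov minT T' ≤ cov minT (T.erase w) + cov minT (insert w T')) ∨
    ∃ z, z ∈ T' ∧ z ∉ T ∧ Feasible maxQ (insert z (T.erase w)) ∧
      Feasible maxQ (insert w (T'.erase z)) ∧
      cov minT T + cov minT T' ≤
        cov minT (insert z (T.erase w)) + cov minT (insert w (T'.erase z)) := by
  classical
  set pops := maxQ ++ minT with hpops
  -- cardinality identities
  have hceri : ∀ P : Finset α, ((T.erase w) ∩ P).card + (if w ∈ P then 1 else 0) =
      (T ∩ P).card := by
    intro P
    rw [Finset.erase_inter]
    by_cases hwP : w ∈ P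
    · have hw : w ∈ T ∩ P := Finset.mem_inter.mpr ⟨hwT, hwP⟩
      rw [Finset.card_erase_of_mem hw, if_pos hwP]
      have : 1 ≤ (T ∩ P).card := Finset.card_pos.mpr ⟨w, hw⟩
      omega
    · rw [Finset.erase_eq_of_notMem (fun h => hwP (Finset.mem_inter.mp h).2), if_neg hwP]
      omega
  have hcins : ∀ P : Finset α, ((insert w T') ∩ P).card =
      (T' ∩ P).card + (if w ∈ P then 1 else 0) := by
    intro P
    by_cases hwP : w ∈ P
    · rw [Finset.insert_inter_of_mem hwP, if_pos hwP,
        Finset.card_insert_of_notMem (fun h => hwT' (Finset.mem_inter.mp h).1)]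
    · rw [Finset.insert_inter_of_notMem hwP, if_neg hwP]
      omega
  by_cases hB : ∃ p ∈ pops, w ∈ p.1 ∧ (T ∩ p.1).card ≤ (T' ∩ p.1).card
  · -- a swap is needed
    set Blist := pops.filter (fun p => decide (w ∈ p.1 ∧ (T ∩ p.1).card ≤ (T' ∩ p.1).card))
      with hBdef
    have hBne : Blist ≠ [] := by
      obtain ⟨p, hp, h1, h2⟩ := hB
      intro hnil
      have : p ∈ Blist := List.mem_filter.mpr ⟨hp, by simp [h1, h2]⟩
      rw [hnil] at this; simp at this
    obtain ⟨pm, hpm_mem, hpm_min⟩ := exists_min_list hBne (fun p => p.1.card)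
    have hpm := List.mem_filter.mp hpm_mem
    have hpm1 : w ∈ pm.1 ∧ (T ∩ pm.1).card ≤ (T' ∩ pm.1).card := by simpa using hpm.2
    -- pm is contained in every member of B
    have hpmsub : ∀ p ∈ pops, w ∈ p.1 → (T ∩ p.1).card ≤ (T' ∩ p.1).card → pm.1 ⊆ p.1 := by
      intro p hp h1 h2
      have hpB : p ∈ Blist := List.mem_filter.mpr ⟨hp, by simp [h1, h2]⟩
      have hcard := hpm_min p hpB
      rcases laminar_comparable hlam hpm.1 hp hpm1.1 h1 with h | h
      · exact h
      · rw [Finset.eq_of_subset_of_card_le h hcard]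
    -- bad pops inside pm
    set badP : Pop α → Prop := fun p => w ∉ p.1 ∧ p.1 ⊆ pm.1 ∧ (T' ∩ p.1).card ≤ (T ∩ p.1).card
      with hbadPdef
    have hbadP_dec : DecidablePred badP := fun p => by
      rw [hbadPdef]; infer_instance
    set bads := pops.filter (fun p => decide (badP p)) with hbadsdef
    -- maximal bad sets
    set maxbads := bads.filter (fun p => decide (∀ q ∈ bads, ¬(p.1 ⊂ q.1))) with hmaxdef
    set MBS : Finset (Finset α) := (maxbads.map (fun p => p.1)).toFinset with hMBSdef
    set U : Finset α := MBS.biUnion id with hUdef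
    -- every bad pop is inside U
    have hbadU : ∀ p ∈ bads, p.1 ⊆ U := by
      intro p hp
      have hsne : bads.filter (fun q => decide (p.1 ⊆ q.1)) ≠ [] := by
        intro hnil
        have : p ∈ bads.filter (fun q => decide (p.1 ⊆ q.1)) :=
          List.mem_filter.mpr ⟨hp, by simp⟩
        rw [hnil] at this; simp at this
      obtain ⟨q, hq_mem, hq_max⟩ := exists_max_list hsne (fun q => q.1.card)
      have hq := List.mem_filter.mp hq_mem
      have hpq : p.1 ⊆ q.1 := by simpa using hq.2
      have hqmax : ∀ q' ∈ bads, ¬(q.1 ⊂ q'.1) := by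
        intro q' hq' hss
        have : q' ∈ bads.filter (fun r => decide (p.1 ⊆ r.1)) :=
          List.mem_filter.mpr ⟨hq', by simp [subset_trans hpq (subset_of_ssubset hss)]⟩
        exact absurd (hq_max q' this) (not_le.mpr (Finset.card_lt_card hss))
      have hqM : q.1 ∈ MBS := by
        rw [hMBSdef, List.mem_toFinset, List.mem_map]
        exact ⟨q, List.mem_filter.mpr ⟨hq.1, by simpa using hqmax⟩, rfl⟩
      intro a ha
      rw [hUdef, Finset.mem_biUnion]
      exact ⟨q.1, hqM, hpq ha⟩
    -- members of MBS are bad sets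
    have hMBS_bad : ∀ D ∈ MBS, ∃ p ∈ bads, p.1 = D := by
      intro D hD
      rw [hMBSdef, List.mem_toFinset, List.mem_map] at hD
      obtain ⟨p, hp, hpD⟩ := hD
      exact ⟨p, (List.mem_filter.mp hp).1, hpD⟩
    -- distinct members of MBS are disjoint
    have hMBS_disj : ∀ D ∈ MBS, ∀ D' ∈ MBS, D ≠ D' → Disjoint D D' := by
      intro D hD D' hD'
      rw [hMBSdef, List.mem_toFinset, List.mem_map] at hD hD'
      obtain ⟨p, hp, rfl⟩ := hD
      obtain ⟨p', hp', rfl⟩ := hD'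
      intro hne
      rw [Finset.disjoint_left]
      intro a hap hap'
      have hpmax := List.mem_filter.mp hp
      have hp'max := List.mem_filter.mp hp'
      have hpb := List.mem_filter.mp hpmax.1
      have hp'b := List.mem_filter.mp hp'max.1
      rcases laminar_comparable hlam hpb.1 hp'b.1 hap hap' with h | h
      · have : p.1 ⊂ p'.1 := ssubset_of_subset_of_ne h hne
        exact (by simpa using hpmax.2 : ∀ q ∈ bads, ¬(p.1 ⊂ q.1)) p' hp'max.1 this
      · have : p'.1 ⊂ p.1 := ssubset_of_subset_of_ne h (Ne.symm hne)
        exact (by simpa using hp'max.2 : ∀ q ∈ bads, ¬(p'.1 ⊂ q.1)) p hpmax.1 this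
    -- U is inside pm and avoids w
    have hUsub : U ⊆ pm.1 := by
      intro a ha
      rw [hUdef, Finset.mem_biUnion] at ha
      obtain ⟨D, hD, haD⟩ := ha
      obtain ⟨p, hp, rfl⟩ := hMBS_bad D hD
      have := (by simpa [hbadPdef] using (List.mem_filter.mp hp).2 :
        w ∉ p.1 ∧ p.1 ⊆ pm.1 ∧ (T' ∩ p.1).card ≤ (T ∩ p.1).card)
      exact this.2.1 haD
    have hwU : w ∉ U := by
      intro hw
      rw [hUdef, Finset.mem_biUnion] at hw
      obtain ⟨D, hD, hwD⟩ := hw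
      obtain ⟨p, hp, rfl⟩ := hMBS_bad D hD
      have := (by simpa [hbadPdef] using (List.mem_filter.mp hp).2 :
        w ∉ p.1 ∧ p.1 ⊆ pm.1 ∧ (T' ∩ p.1).card ≤ (T ∩ p.1).card)
      exact this.1 hwD
    -- counting: a good z exists
    have hXY : ∀ D ∈ MBS, ((T' \ T) ∩ D).card ≤ ((T \ T') ∩ D).card := by
      intro D hD
      obtain ⟨p, hp, rfl⟩ := hMBS_bad D hD
      have hbad := (by simpa [hbadPdef] using (List.mem_filter.mp hp).2 :
        w ∉ p.1 ∧ p.1 ⊆ pm.1 ∧ (T' ∩ p.1).card ≤ (T ∩ p.1).card)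
      have h1 := card_inter_sdiff_add T' T p.1
      have h2 := card_inter_sdiff_add T T' p.1
      rw [Finset.inter_comm T' T] at h1
      omega
    have hbiU : ∀ X : Finset α, (X ∩ U).card = MBS.sum (fun D => (X ∩ D).card) := by
      intro X
      rw [hUdef]
      rw [show X ∩ MBS.biUnion id = MBS.biUnion (fun D => X ∩ D) by
        ext a
        simp only [Finset.mem_inter, Finset.mem_biUnion, id]
        tauto]
      exact Finset.card_biUnion (fun D hD D' hD' hne =>
        Finset.disjoint_left.mpr fun a ha ha' =>
          Finset.disjoint_left.mp (hMBS_disj D hD D' hD' hne)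
            (Finset.mem_inter.mp ha).2 (Finset.mem_inter.mp ha').2)
    have hXU : ((T' \ T) ∩ U).card ≤ ((T \ T') ∩ U).card := by
      rw [hbiU, hbiU]
      exact Finset.sum_le_sum hXY
    have hsplX := card_inter_split (X := T' \ T) hUsub
    have hsplY := card_inter_split (X := T \ T') hUsub
    have hXpm : ((T \ T') ∩ pm.1).card ≤ ((T' \ T) ∩ pm.1).card := by
      have h1 := card_inter_sdiff_add T' T pm.1
      have h2 := card_inter_sdiff_add T T' pm.1
      rw [Finset.inter_comm T' T] at h1
      have := hpm1.2
      omega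
    have hwmem : w ∈ (T \ T') ∩ (pm.1 \ U) :=
      Finset.mem_inter.mpr ⟨Finset.mem_sdiff.mpr ⟨hwT, hwT'⟩,
        Finset.mem_sdiff.mpr ⟨hpm1.1, hwU⟩⟩
    have hYpos : 1 ≤ ((T \ T') ∩ (pm.1 \ U)).card := Finset.card_pos.mpr ⟨w, hwmem⟩
    have hzpos : 0 < ((T' \ T) ∩ (pm.1 \ U)).card := by omega
    obtain ⟨z, hzmem⟩ := Finset.card_pos.mp hzpos
    have hzT' : z ∈ T' := (Finset.mem_sdiff.mp (Finset.mem_inter.mp hzmem).1).1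
    have hzT : z ∉ T := (Finset.mem_sdiff.mp (Finset.mem_inter.mp hzmem).1).2
    have hzpm : z ∈ pm.1 := (Finset.mem_sdiff.mp (Finset.mem_inter.mp hzmem).2).1
    have hzU : z ∉ U := (Finset.mem_sdiff.mp (Finset.mem_inter.mp hzmem).2).2
    -- the two direction facts
    have hg1 : ∀ p ∈ pops, z ∈ p.1 → w ∉ p.1 → (T ∩ p.1).card < (T' ∩ p.1).card := by
      intro p hp hzp hwp
      by_contra hcon
      push_neg at hcon
      have hsub : p.1 ⊆ pm.1 := by
        rcases laminar_comparable hlam hp hpm.1 hzp hzpm with h | h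
        · exact h
        · exact absurd (h hpm1.1) hwp
      have hpbad : p ∈ bads := List.mem_filter.mpr ⟨hp, by
        simp only [hbadPdef, decide_eq_true_eq]
        exact ⟨hwp, hsub, hcon⟩⟩
      exact hzU (hbadU p hpbad hzp)
    have hg2 : ∀ p ∈ pops, w ∈ p.1 → z ∉ p.1 → (T' ∩ p.1).card < (T ∩ p.1).card := by
      intro p hp hwp hzp
      by_contra hcon
      push_neg at hcon
      exact hzp (hpmsub p hp hwp hcon hzpm)
    -- swap cardinality identities
    have hcsT := fun P => card_inter_swap (T := T) (x := z) (z := w) hzT hwT P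
    have hcsT' := fun P => card_inter_swap (T := T') (x := w) (z := z) hwT' hzT' P
    refine Or.inr ⟨z, hzT', hzT, ?_, ?_, ?_⟩
    · intro q hq
      have hcs := hcsT q.1
      by_cases hzq : z ∈ q.1 <;> by_cases hwq : w ∈ q.1
      · have := hTf q hq
        simp only [if_pos hzq, if_pos hwq] at hcs
        omega
      · have h1 := hg1 q (List.mem_append_left _ hq) hzq hwq
        have h2 := hT'f q hq
        simp only [if_pos hzq, if_neg hwq] at hcs
        omega
      · have := hTf q hq
        simp only [if_neg hzq, if_pos hwq] at hcs
        omega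
      · have := hTf q hq
        simp only [if_neg hzq, if_neg hwq] at hcs
        omega
    · intro q hq
      have hcs := hcsT' q.1
      by_cases hzq : z ∈ q.1 <;> by_cases hwq : w ∈ q.1
      · have := hT'f q hq
        simp only [if_pos hzq, if_pos hwq] at hcs
        omega
      · have := hT'f q hq
        simp only [if_pos hzq, if_neg hwq] at hcs
        omega
      · have h1 := hg2 q (List.mem_append_left _ hq) hwq hzq
        have h2 := hTf q hq
        simp only [if_neg hzq, if_pos hwq] at hcs
        omega
      · have := hT'f q hq
        simp only [if_neg hzq, if_neg hwq] at hcs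
        omega
    · unfold cov
      rw [← sum_map_add, ← sum_map_add]
      apply sum_map_le
      intro p hp
      have hcs1 := hcsT p.1
      have hcs2 := hcsT' p.1
      by_cases hzp : z ∈ p.1 <;> by_cases hwp : w ∈ p.1
      · simp only [if_pos hzp, if_pos hwp] at hcs1 hcs2
        rw [Nat.min_def, Nat.min_def, Nat.min_def, Nat.min_def]
        split_ifs <;> omega
      · simp only [if_pos hzp, if_neg hwp] at hcs1 hcs2
        have h1 := hg1 p (List.mem_append_right _ hp) hzp hwp
        rw [Nat.min_def, Nat.min_def, Nat.min_def, Nat.min_def]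
        split_ifs <;> omega
      · simp only [if_neg hzp, if_pos hwp] at hcs1 hcs2
        have h1 := hg2 p (List.mem_append_right _ hp) hwp hzp
        rw [Nat.min_def, Nat.min_def, Nat.min_def, Nat.min_def]
        split_ifs <;> omega
      · simp only [if_neg hzp, if_neg hwp] at hcs1 hcs2
        rw [Nat.min_def, Nat.min_def, Nat.min_def, Nat.min_def]
        split_ifs <;> omega
  · -- no swap needed: move w directly
    push_neg at hB
    have hstrict : ∀ p ∈ pops, w ∈ p.1 → (T' ∩ p.1).card < (T ∩ p.1).card :=
      fun p hp hw => hB p hp hw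
    refine Or.inl ⟨?_, ?_⟩
    · intro q hq
      rw [hcins q.1]
      by_cases hwq : w ∈ q.1
      · rw [if_pos hwq]
        have h1 := hstrict q (List.mem_append_left _ hq) hwq
        have h2 := hTf q hq
        omega
      · rw [if_neg hwq]
        simpa using hT'f q hq
    · unfold cov
      rw [← sum_map_add, ← sum_map_add]
      apply sum_map_le
      intro p hp
      have h1 := hceri p.1
      have h2 := hcins p.1
      by_cases hwp : w ∈ p.1
      · rw [if_pos hwp] at h1 h2
        have h3 := hstrict p (List.mem_append_right _ hp) hwp
        rw [Nat.min_def, Nat.min_def, Nat.min_def, Nat.min_def]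
        split_ifs <;> omega
      · rw [if_neg hwp] at h1 h2
        rw [Nat.min_def, Nat.min_def, Nat.min_def, Nat.min_def]
        split_ifs <;> omega

/-! ### Laminar matroid augmentation -/

lemma aug (hlam : Laminar (maxQ ++ minT)) {F F' : Finset α}
    (hF : Feasible maxQ F) (hF' : Feasible maxQ F') (hcard : F.card < F'.card) :
    ∃ z, z ∈ F' ∧ z ∉ F ∧ Feasible maxQ (insert z F) := by
  classical
  by_contra hcon
  push_neg at hcon
  -- every z in F' \ F has a tight population
  have htz : ∀ z ∈ F', z ∉ F → ∃ q ∈ maxQ, z ∈ q.1 ∧ q.2 ≤ (F ∩ q.1).card := by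
    intro z hz hzF
    have := hcon z hz hzF
    rw [Feasible] at this
    push_neg at this
    obtain ⟨q, hq, hcq⟩ := this
    have hzq : z ∈ q.1 := by
      by_contra hzq
      rw [Finset.insert_inter_of_notMem hzq] at hcq
      exact absurd (hF q hq) (not_le.mpr hcq)
    rw [Finset.insert_inter_of_mem hzq,
      Finset.card_insert_of_notMem (fun h => hzF (Finset.mem_inter.mp h).1)] at hcq
    exact ⟨q, hq, hzq, by omega⟩
  -- globally maximal tight populations
  set QS : Finset (Finset α) :=
    ((maxQ.filter (fun q => decide (q.2 ≤ (F ∩ q.1).card ∧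
      ∀ q' ∈ maxQ, q'.2 ≤ (F ∩ q'.1).card → ¬(q.1 ⊂ q'.1)))).map (fun q => q.1)).toFinset
    with hQSdef
  have hQSmem : ∀ D ∈ QS, ∃ q ∈ maxQ, q.1 = D ∧ q.2 ≤ (F ∩ q.1).card ∧
      ∀ q' ∈ maxQ, q'.2 ≤ (F ∩ q'.1).card → ¬(q.1 ⊂ q'.1) := by
    intro D hD
    rw [hQSdef, List.mem_toFinset, List.mem_map] at hD
    obtain ⟨q, hq, rfl⟩ := hD
    have h := List.mem_filter.mp hq
    have h2 : q.2 ≤ (F ∩ q.1).card ∧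
        ∀ q' ∈ maxQ, q'.2 ≤ (F ∩ q'.1).card → ¬(q.1 ⊂ q'.1) := of_decide_eq_true h.2
    exact ⟨q, h.1, rfl, h2.1, h2.2⟩
  set U : Finset α := QS.biUnion id with hUdef
  -- every augmenting-blocked z lies in U
  have hzU : ∀ z ∈ F', z ∉ F → z ∈ U := by
    intro z hz hzF
    obtain ⟨q, hq, hzq, hcq⟩ := htz z hz hzF
    have hsne : maxQ.filter (fun q' => decide (z ∈ q'.1 ∧ q'.2 ≤ (F ∩ q'.1).card)) ≠ [] := by
      intro hnil
      have : q ∈ maxQ.filter (fun q' => decide (z ∈ q'.1 ∧ q'.2 ≤ (F ∩ q'.1).card)) :=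
        List.mem_filter.mpr ⟨hq, by simp [hzq, hcq]⟩
      rw [hnil] at this; simp at this
    obtain ⟨qm, hqm_mem, hqm_max⟩ := exists_max_list hsne (fun q' => q'.1.card)
    have hqm := List.mem_filter.mp hqm_mem
    have hqm2 : z ∈ qm.1 ∧ qm.2 ≤ (F ∩ qm.1).card := by simpa using hqm.2
    have hqmQS : qm.1 ∈ QS := by
      rw [hQSdef, List.mem_toFinset, List.mem_map]
      refine ⟨qm, List.mem_filter.mpr ⟨hqm.1, ?_⟩, rfl⟩
      simp only [decide_eq_true_eq]
      refine ⟨hqm2.2, fun q' hq' hcq' hss => ?_⟩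
      have hzq' : z ∈ q'.1 := subset_of_ssubset hss hqm2.1
      have : q' ∈ maxQ.filter (fun r => decide (z ∈ r.1 ∧ r.2 ≤ (F ∩ r.1).card)) :=
        List.mem_filter.mpr ⟨hq', by simp [hzq', hcq']⟩
      exact absurd (hqm_max q' this) (not_le.mpr (Finset.card_lt_card hss))
    rw [hUdef, Finset.mem_biUnion]
    exact ⟨qm.1, hqmQS, hqm2.1⟩
  -- distinct maximal tight pops are disjoint
  have hQS_disj : ∀ D ∈ QS, ∀ D' ∈ QS, D ≠ D' → Disjoint D D' := by
    intro D hD D' hD' hne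
    obtain ⟨q, hq, rfl, hqt, hqmax⟩ := hQSmem D hD
    obtain ⟨q', hq', rfl, hq't, hq'max⟩ := hQSmem D' hD'
    rw [Finset.disjoint_left]
    intro a ha ha'
    rcases laminar_comparable hlam (List.mem_append_left _ hq)
      (List.mem_append_left _ hq') ha ha' with h | h
    · exact hqmax q' hq' hq't (ssubset_of_subset_of_ne h hne)
    · exact hq'max q hq hqt (ssubset_of_subset_of_ne h (Ne.symm hne))
  have hbiU : ∀ X : Finset α, (X ∩ U).card = QS.sum (fun D => (X ∩ D).card) := by
    intro X
    rw [hUdef]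
    rw [show X ∩ QS.biUnion id = QS.biUnion (fun D => X ∩ D) by
      ext a
      simp only [Finset.mem_inter, Finset.mem_biUnion, id]
      tauto]
    exact Finset.card_biUnion (fun D hD D' hD' hne =>
      Finset.disjoint_left.mpr fun a ha ha' =>
        Finset.disjoint_left.mp (hQS_disj D hD D' hD' hne)
          (Finset.mem_inter.mp ha).2 (Finset.mem_inter.mp ha').2)
  -- per-component comparison
  have hcomp : ∀ D ∈ QS, (F' ∩ D).card ≤ (F ∩ D).card := by
    intro D hD
    obtain ⟨q, hq, rfl, hqt, _⟩ := hQSmem D hD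
    exact le_trans (hF' q hq) hqt
  have hU : (F' ∩ U).card ≤ (F ∩ U).card := by
    rw [hbiU, hbiU]
    exact Finset.sum_le_sum hcomp
  -- outside U, F' is inside F
  have hout : F' \ U ⊆ F \ U := by
    intro a ha
    rw [Finset.mem_sdiff] at ha ⊢
    refine ⟨?_, ha.2⟩
    by_contra haF
    exact ha.2 (hzU a ha.1 haF)
  have h1 : (F' ∩ U).card + (F' \ U).card = F'.card := Finset.card_inter_add_card_sdiff F' U
  have h2 : (F ∩ U).card + (F \ U).card = F.card := Finset.card_inter_add_card_sdiff F U
  have h3 : (F' \ U).card ≤ (F \ U).card := Finset.card_le_card hout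
  omega

/-! ### The main static argument -/

theorem main_static (hlam : Laminar (maxQ ++ minT)) {C : Finset α} {c : α} (hc : c ∈ C)
    {F F' : Finset α} (hF : IsOpt maxQ minT ∅ C F) (hF' : IsOpt maxQ minT ∅ (C.erase c) F') :
    F'.card ≤ F.card ∧ (c ∈ F → F.erase c ⊆ F') := by
  classical
  obtain ⟨hFc, hF2, hF3⟩ := hF
  obtain ⟨hF'c, hF'2, hF'3⟩ := hF'
  have hFsub : F ⊆ C := by simpa using hFc.2.1
  have hF'sub : F' ⊆ C.erase c := by simpa using hF'c.2.1
  have hFfeas : Feasible maxQ F := hFc.2.2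
  have hF'feas : Feasible maxQ F' := hF'c.2.2
  have hcand_full : ∀ T : Finset α, T ⊆ C → Feasible maxQ T → Cand maxQ ∅ C T := by
    intro T h1 h2
    exact ⟨Finset.empty_subset _, by simpa using h1, h2⟩
  have hcand_er : ∀ T : Finset α, T ⊆ C.erase c → Feasible maxQ T →
      Cand maxQ ∅ (C.erase c) T := by
    intro T h1 h2
    exact ⟨Finset.empty_subset _, by simpa using h1, h2⟩
  constructor
  · -- cardinality bound
    by_contra hcon
    push_neg at hcon
    obtain ⟨z, hzF', hzF, hzfeas⟩ := aug (minT := minT) hlam hFfeas hF'feas hcon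
    have hT : Cand maxQ ∅ C (insert z F) := hcand_full _
      (Finset.insert_subset (Finset.erase_subset _ _ (hF'sub hzF')) hFsub) hzfeas
    rcases hF2 _ hT with h | ⟨h1, h2⟩
    · exact absurd (cov_mono minT (Finset.subset_insert z F)) (not_le.mpr h)
    · rw [Finset.card_insert_of_notMem hzF] at h2
      omega
  · -- subset property
    intro hcF
    by_contra hcon
    obtain ⟨w, hwFe, hwF'⟩ := Finset.not_subset.mp hcon
    have hwF : w ∈ F := Finset.mem_of_mem_erase hwFe
    have hwc : w ≠ c := (Finset.mem_erase.mp hwFe).1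
    rcases exch (minT := minT) hlam hFfeas hF'feas hwF hwF' with
      ⟨hfeas2, hcov⟩ | ⟨z, hzF', hzF, hfeas1, hfeas2, hcov⟩
    · -- inserting w into F' improves it: contradiction
      have hT2 : Cand maxQ ∅ (C.erase c) (insert w F') := hcand_er _
        (Finset.insert_subset (Finset.mem_erase.mpr ⟨hwc, hFsub hwF⟩) hF'sub) hfeas2
      have hcovm : cov minT (F.erase w) ≤ cov minT F :=
        cov_mono minT (Finset.erase_subset _ _)
      have hge : cov minT F' ≤ cov minT (insert w F') := by omega
      rcases hF'2 _ hT2 with h | ⟨h1, h2⟩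
      · omega
      · rw [Finset.card_insert_of_notMem hwF'] at h2
        omega
    · -- the swap: both must tie, and the tie-breaks clash
      have hzc : z ≠ c := by
        intro rfl'
        exact (Finset.mem_erase.mp (hF'sub hzF')).1 rfl'
      have hwT1 : w ∉ insert z (F.erase w) := by
        intro h
        rcases Finset.mem_insert.mp h with h | h
        · exact hzF (h ▸ hwF)
        · exact (Finset.mem_erase.mp h).1 rfl
      have hzT2 : z ∉ insert w (F'.erase z) := by
        intro h
        rcases Finset.mem_insert.mp h with h | h
        · exact hzF (h ▸ hwF)
        · exact (Finset.mem_erase.mp h).1 rfl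
      have hT1 : Cand maxQ ∅ C (insert z (F.erase w)) := hcand_full _
        (Finset.insert_subset (Finset.erase_subset _ _ (hF'sub hzF'))
          (subset_trans (Finset.erase_subset _ _) hFsub)) hfeas1
      have hT2 : Cand maxQ ∅ (C.erase c) (insert w (F'.erase z)) := hcand_er _
        (Finset.insert_subset (Finset.mem_erase.mpr ⟨hwc, hFsub hwF⟩)
          (subset_trans (Finset.erase_subset _ _) hF'sub)) hfeas2
      have hzT1 : z ∈ insert z (F.erase w) := Finset.mem_insert_self _ _
      have hwT2 : w ∈ insert w (F'.erase z) := Finset.mem_insert_self _ _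
      have hcard1 : (insert z (F.erase w)).card = F.card := by
        rw [Finset.card_insert_of_notMem (fun h => hzF (Finset.mem_of_mem_erase h)),
          Finset.card_erase_of_mem hwF]
        have : 1 ≤ F.card := Finset.card_pos.mpr ⟨w, hwF⟩
        omega
      have hcard2 : (insert w (F'.erase z)).card = F'.card := by
        rw [Finset.card_insert_of_notMem (fun h => hwF' (Finset.mem_of_mem_erase h)),
          Finset.card_erase_of_mem hzF']
        have : 1 ≤ F'.card := Finset.card_pos.mpr ⟨z, hzF'⟩
        omega
      have ho1 := hF2 _ hT1
      have ho2 := hF'2 _ hT2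
      have hcov1 : cov minT (insert z (F.erase w)) = cov minT F := by
        rcases ho1 with h | ⟨h, _⟩ <;> rcases ho2 with h' | ⟨h', _⟩ <;> omega
      have hcov2 : cov minT (insert w (F'.erase z)) = cov minT F' := by
        rcases ho1 with h | ⟨h, _⟩ <;> rcases ho2 with h' | ⟨h', _⟩ <;> omega
      have hne1 : insert z (F.erase w) ≠ F := by
        intro h
        exact hzF (h ▸ hzT1)
      have hne2 : insert w (F'.erase z) ≠ F' := by
        intro h
        exact hwF' (h ▸ hwT2)
      obtain ⟨m, hmF, hmT1, hagree1⟩ := hF3 _ hT1 hcov1 hcard1 hne1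
      obtain ⟨m', hm'F', hm'T2, hagree2⟩ := hF'3 _ hT2 hcov2 hcard2 hne2
      -- m must be w
      have hmw : m = w := by
        by_contra hne
        apply hmT1
        refine Finset.mem_insert_of_mem (Finset.mem_erase.mpr ⟨hne, hmF⟩)
      -- m' must be z
      have hm'z : m' = z := by
        by_contra hne
        apply hm'T2
        refine Finset.mem_insert_of_mem (Finset.mem_erase.mpr ⟨hne, hm'F'⟩)
      rw [hmw] at hagree1
      rw [hm'z] at hagree2
      -- w < z from the first tie-break
      have hwz : w < z := by
        rcases lt_trichotomy w z with h | h | h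
        · exact h
        · exact absurd (h ▸ hzF') hwF'
        · have := (hagree1 z h).mp hzT1
          exact absurd this hzF
      -- contradiction from the second tie-break
      have := (hagree2 w hwz).mp hwT2
      exact hwF' this

end PMA14



/-- Under laminar populations whose positive-minimum-target subfamily is a
union of pairwise-disjoint chains, the Algorithm 2 choice function satisfies the law of
aggregate demand, and moreover removing a chosen candidate changes the choice by at most
replacing her with a single other candidate. -/
theorem choice2_lad {α : Type*} [DecidableEq α] [LinearOrder α]
    (maxQ minT : List (Pop α))
    (hlam : Laminar (maxQ ++ minT))
    (hchains : UnionOfDisjointChains (minTargetSets minT))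
    (C : Finset α) (c : α) (hc : c ∈ C) :
    (choice2 maxQ minT (C.erase c)).card ≤ (choice2 maxQ minT C).card ∧
      (c ∈ choice2 maxQ minT C →
        choice2 maxQ minT (C.erase c) = (choice2 maxQ minT C).erase c ∨
          ∃ d, choice2 maxQ minT (C.erase c) =
            insert d ((choice2 maxQ minT C).erase c)) := by
  classical
  have hfeas0 : Feasible maxQ (∅ : Finset α) := by
    intro q hq
    simp
  have hF := PMA14.char hlam C ∅ hfeas0
  have hF' := PMA14.char hlam (C.erase c) ∅ hfeas0
  obtain ⟨hcard, hsub⟩ := PMA14.main_static hlam hc hF hF'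
  unfold choice2
  refine ⟨hcard, ?_⟩
  intro hcF
  set F := choice2Go maxQ minT C ∅ with hFdef
  set F' := choice2Go maxQ minT (C.erase c) ∅ with hF'def
  have hs : F.erase c ⊆ F' := hsub hcF
  by_cases heq : F' = F.erase c
  · exact Or.inl heq
  · right
    have hss : F.erase c ⊂ F' := ssubset_of_subset_of_ne hs (Ne.symm heq)
    obtain ⟨d, hdF', hdbase⟩ := Finset.exists_of_ssubset hss
    refine ⟨d, ?_⟩
    have hins : insert d (F.erase c) ⊆ F' := Finset.insert_subset hdF' hs
    have hcard2 : F'.card ≤ (insert d (F.erase c)).card := by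
      rw [Finset.card_insert_of_notMem hdbase, Finset.card_erase_of_mem hcF]
      have : 1 ≤ F.card := Finset.card_pos.mpr ⟨c, hcF⟩
      omega
    exact (Finset.eq_of_subset_of_card_le hins hcard2).symm
end

section
/- The Algorithm 2 choice function satisfies irrelevance of rejected contracts without any structural assumption on populations: for any family of populations with maximum quotas and minimum targets, any strict priority order, any candidate set C, and any c ∈ C \ Ch(C), we have Ch(C \ {c}) = Ch(C). -/
open PMA

section Aux

variable {α : Type*} [DecidableEq α] [LinearOrder α]

lemma choice2Go_subset (maxQ minT : List (Pop α)) :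
    ∀ R S : Finset α, S ⊆ choice2Go maxQ minT R S := by
  intro R
  induction R using Finset.strongInduction with
  | _ R ih =>
    intro S
    rw [choice2Go]
    split
    · next hR =>
      have hsub := Finset.erase_ssubset (pick_mem minT S hR)
      split
      · exact (Finset.subset_insert _ _).trans (ih _ hsub _)
      · exact ih _ hsub _
    · exact Finset.Subset.refl _

lemma bestSet_erase (minT : List (Pop α)) (S : Finset α) {R : Finset α} {c p : α}
    (hp : p ∈ bestSet minT S R) (hpc : p ≠ c) :
    bestSet minT S (R.erase c) = (bestSet minT S R).erase c := by
  obtain ⟨hpR, hpmax⟩ := Finset.mem_filter.mp hp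
  ext d
  simp only [bestSet, Finset.mem_filter, Finset.mem_erase]
  constructor
  · rintro ⟨⟨hdc, hdR⟩, hdmax⟩
    have hpd : nUnmet minT S p ≤ nUnmet minT S d := hdmax p ⟨hpc, hpR⟩
    refine ⟨hdc, hdR, fun e he => ?_⟩
    by_cases hec : e = c
    · exact (hpmax e he).trans hpd
    · exact hdmax e ⟨hec, he⟩
  · rintro ⟨hdc, hdR, hdmax⟩
    exact ⟨⟨hdc, hdR⟩, fun e he => hdmax e he.2⟩

lemma pick_erase (minT : List (Pop α)) (S : Finset α) {R : Finset α} {c : α}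
    (hR : R.Nonempty) (hpc : pick minT S hR ≠ c)
    (hR' : (R.erase c).Nonempty) :
    pick minT S hR' = pick minT S hR := by
  set p := pick minT S hR with hp
  have hpmem : p ∈ bestSet minT S R := Finset.min'_mem _ _
  have hbe := bestSet_erase minT S hpmem hpc
  have hpe : p ∈ bestSet minT S (R.erase c) := by
    rw [hbe]; exact Finset.mem_erase.mpr ⟨hpc, hpmem⟩
  refine le_antisymm (Finset.min'_le _ _ hpe) ?_
  have hmem' : pick minT S hR' ∈ bestSet minT S R :=
    (Finset.mem_erase.mp (hbe.le (Finset.min'_mem _ _))).2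
  exact Finset.min'_le _ _ hmem'

lemma choice2Go_irc (maxQ minT : List (Pop α)) :
    ∀ R S : Finset α, ∀ c, c ∈ R → c ∉ choice2Go maxQ minT R S →
    choice2Go maxQ minT (R.erase c) S = choice2Go maxQ minT R S := by
  intro R
  induction R using Finset.strongInduction with
  | _ R ih =>
    intro S c hcR hcres
    have hR : R.Nonempty := ⟨c, hcR⟩
    rw [choice2Go, dif_pos hR] at hcres
    conv_rhs => rw [choice2Go, dif_pos hR]
    set p := pick minT S hR with hpdef
    by_cases hpc : p = c
    · have hfeas : ¬ Feasible maxQ (insert p S) := by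
        intro hf
        rw [if_pos hf] at hcres
        exact hcres (choice2Go_subset maxQ minT _ _
          (by rw [← hpc]; exact Finset.mem_insert_self _ _))
      rw [if_neg hfeas] at hcres ⊢
      rw [hpc]
    · have hcRp : c ∈ R.erase p := Finset.mem_erase.mpr ⟨fun h => hpc h.symm, hcR⟩
      have hR' : (R.erase c).Nonempty := ⟨p, Finset.mem_erase.mpr ⟨hpc, pick_mem minT S hR⟩⟩
      conv_lhs => rw [choice2Go]
      rw [dif_pos hR', pick_erase minT S hR hpc hR', ← hpdef]
      have hss : R.erase p ⊂ R := Finset.erase_ssubset (pick_mem minT S hR)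
      rw [Finset.erase_right_comm]
      split at hcres
      · next hf =>
        rw [if_pos hf]
        exact ih _ hss _ c hcRp hcres
      · next hf =>
        rw [if_neg hf]
        exact ih _ hss _ c hcRp hcres

end Aux

/-- The Algorithm 2 choice function satisfies irrelevance of rejected
contracts without any structural assumption on the populations:
if `c ∈ C \ Ch(C)` then `Ch(C \ {c}) = Ch(C)`. -/
theorem choice2_irc {α : Type*} [DecidableEq α] [LinearOrder α]
    (maxQ minT : List (Pop α)) (C : Finset α) (c : α)
    (hc : c ∈ C) (hrej : c ∉ choice2 maxQ minT C) :
    choice2 maxQ minT (C.erase c) = choice2 maxQ minT C :=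
  choice2Go_irc maxQ minT C ∅ c hc hrej
end

section
/- In candidate-proposing DA where every institution's choice function is substitutable and satisfies IRC, the set of candidates tentatively held by each institution is monotone in the following sense: if a candidate is rejected by an institution in some round, she would also be rejected from any superset of applicants that institution faces in any later round; consequently, reinstating rejected applications cannot change the outcome, and the resulting matching has no blocking pairs involving a candidate and an institution that rejected her. -/
open PMA

namespace DAP

open PMA

variable {α β : Type*} [Fintype α] [DecidableEq α] [DecidableEq β]

lemma applyTo_not_rej {prefs : α → List β} {rej : α → Finset β} {c : α} {m : β}
    (h : applyTo prefs rej c = some m) : m ∉ rej c := by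
  simpa using List.find?_some h

lemma mem_applicants {prefs : α → List β} {rej : α → Finset β} {c : α} {m : β} :
    c ∈ applicants prefs rej m ↔ applyTo prefs rej c = some m := by
  simp [applicants]

lemma applyTo_congr {prefs : α → List β} {rej rej' : α → Finset β} {c : α}
    (h : rej c = rej' c) : applyTo prefs rej c = applyTo prefs rej' c := by
  unfold applyTo; rw [h]

lemma rej_sub_daRound (Ch : β → Finset α → Finset α) (prefs : α → List β)
    (rej : α → Finset β) (c : α) : rej c ⊆ daRound Ch prefs rej c := by
  unfold daRound
  cases h : applyTo prefs rej c with
  | none => simp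
  | some m => simp only []; split <;> simp [Finset.subset_insert]

lemma daRound_mem {Ch : β → Finset α → Finset α} {prefs : α → List β}
    {rej : α → Finset β} {c : α} {m : β} (h : m ∈ daRound Ch prefs rej c) :
    m ∈ rej c ∨ (applyTo prefs rej c = some m ∧ c ∉ Ch m (applicants prefs rej m)) := by
  unfold daRound at h
  cases ha : applyTo prefs rej c with
  | none => rw [ha] at h; exact Or.inl h
  | some m' =>
    rw [ha] at h; simp only [] at h
    by_cases hc : c ∈ Ch m' (applicants prefs rej m')
    · rw [if_pos hc] at h; exact Or.inl h
    · rw [if_neg hc] at h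
      rcases Finset.mem_insert.mp h with rfl | h
      · exact Or.inr ⟨rfl, hc⟩
      · exact Or.inl h

lemma daRound_of_chosen {Ch : β → Finset α → Finset α} {prefs : α → List β}
    {rej : α → Finset β} {c : α} {m : β} (h : applyTo prefs rej c = some m)
    (hc : c ∈ Ch m (applicants prefs rej m)) : daRound Ch prefs rej c = rej c := by
  unfold daRound; rw [h]; simp only []; rw [if_pos hc]

lemma daRound_of_rejected {Ch : β → Finset α → Finset α} {prefs : α → List β}
    {rej : α → Finset β} {c : α} {m : β} (h : applyTo prefs rej c = some m)
    (hc : c ∉ Ch m (applicants prefs rej m)) :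
    daRound Ch prefs rej c = insert m (rej c) := by
  unfold daRound; rw [h]; simp only []; rw [if_neg hc]

lemma ch_eq_of_subset (Ch : β → Finset α → Finset α)
    (hirc : ∀ m (C : Finset α) (c : α), c ∈ C → c ∉ Ch m C → Ch m (C.erase c) = Ch m C)
    (m : β) : ∀ C B : Finset α, B ⊆ C → Ch m C ⊆ B → Ch m B = Ch m C := by
  intro C
  induction C using Finset.strongInductionOn with
  | _ C ih =>
    intro B hBC hCB
    rcases hBC.eq_or_ssubset with rfl | hss
    · rfl
    · obtain ⟨d, hdC, hdB⟩ := Finset.exists_of_ssubset hss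
      have hd : d ∉ Ch m C := fun h => hdB (hCB h)
      have he := hirc m C d hdC hd
      rw [← he]
      exact ih (C.erase d) (Finset.erase_ssubset hdC) B
        (Finset.subset_erase.mpr ⟨hBC, hdB⟩) (he ▸ hCB)

/-- Rejection sets are monotone along DA rounds. -/
lemma rk_mono (Ch : β → Finset α → Finset α) (prefs : α → List β) (c : α)
    {k k' : ℕ} (h : k ≤ k') :
    ((daRound Ch prefs)^[k] fun _ => ∅) c ⊆ ((daRound Ch prefs)^[k'] fun _ => ∅) c := by
  induction k' with
  | zero => rw [Nat.le_zero.mp h]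
  | succ k' ih =>
    rcases Nat.lt_or_ge k (k' + 1) with hlt | hge
    · refine (ih (Nat.lt_succ_iff.mp hlt)).trans ?_
      rw [Function.iterate_succ_apply']
      exact rej_sub_daRound Ch prefs _ c
    · rw [Nat.le_antisymm h hge]

/-- The key invariant: at every round, the institution's choice from its current
applicants together with all candidates it has rejected equals its choice from the
current applicants alone. -/
lemma da_invariant (Ch : β → Finset α → Finset α) (prefs : α → List β)
    (hchoice : ∀ m (C : Finset α), Ch m C ⊆ C)
    (hsub : ∀ m (C C' : Finset α) (c : α), c ∈ Ch m C → c ∈ C' → C' ⊆ C → c ∈ Ch m C')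
    (hirc : ∀ m (C : Finset α) (c : α), c ∈ C → c ∉ Ch m C → Ch m (C.erase c) = Ch m C)
    (k : ℕ) (m : β) :
    Ch m (applicants prefs ((daRound Ch prefs)^[k] fun _ => ∅) m ∪
        (Finset.univ.filter fun c => m ∈ ((daRound Ch prefs)^[k] fun _ => ∅) c)) =
      Ch m (applicants prefs ((daRound Ch prefs)^[k] fun _ => ∅) m) := by
  induction k with
  | zero => simp
  | succ k ih =>
    rw [Function.iterate_succ_apply']
    set rej : α → Finset β := (daRound Ch prefs)^[k] fun _ => ∅ with hrejdef
    set rej' : α → Finset β := daRound Ch prefs rej with hrej'def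
    set A : Finset α := applicants prefs rej m with hAdef
    set A' : Finset α := applicants prefs rej' m with hA'def
    set R : Finset α := Finset.univ.filter fun c => m ∈ rej c with hRdef
    set R' : Finset α := Finset.univ.filter fun c => m ∈ rej' c with hR'def
    have hmemR : ∀ c, c ∈ R ↔ m ∈ rej c := fun c => by simp [hRdef]
    have hmemR' : ∀ c, c ∈ R' ↔ m ∈ rej' c := fun c => by simp [hR'def]
    set N : Finset α := A' \ (A ∪ R) with hNdef
    -- (a) chosen applicants remain applicants
    have ha : Ch m A ⊆ A' := by
      intro c hc
      have hcA : c ∈ A := hchoice m A hc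
      have happ : applyTo prefs rej c = some m := mem_applicants.mp hcA
      have heq : rej' c = rej c := daRound_of_chosen happ hc
      exact mem_applicants.mpr ((applyTo_congr heq).trans happ)
    -- (b) old candidates who are now applicants were chosen
    have hb : ∀ c ∈ A', c ∈ A ∪ R → c ∈ Ch m A := by
      intro c hcA' hcAR
      have happ' : applyTo prefs rej' c = some m := mem_applicants.mp hcA'
      have hnot : m ∉ rej' c := applyTo_not_rej happ'
      rcases Finset.mem_union.mp hcAR with hcA | hcR
      · by_contra hcn
        exact hnot (by
          rw [hrej'def, daRound_of_rejected (mem_applicants.mp hcA) hcn]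
          exact Finset.mem_insert_self m _)
      · exact absurd (rej_sub_daRound Ch prefs rej c ((hmemR c).mp hcR)) hnot
    -- (c) rejections persist
    have hc : R ⊆ R' := fun c h =>
      (hmemR' c).mpr (rej_sub_daRound Ch prefs rej c ((hmemR c).mp h))
    -- (d) old applicants are applicants or rejected
    have hd : A ⊆ A' ∪ R' := by
      intro c hcA
      by_cases hch : c ∈ Ch m A
      · exact Finset.mem_union_left _ (ha hch)
      · refine Finset.mem_union_right _ ((hmemR' c).mpr ?_)
        rw [hrej'def, daRound_of_rejected (mem_applicants.mp hcA) hch]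
        exact Finset.mem_insert_self m _
    -- (e) new rejections come from old applicants
    have he : R' ⊆ R ∪ A := by
      intro c h
      rcases daRound_mem ((hmemR' c).mp h) with h' | ⟨h', _⟩
      · exact Finset.mem_union_left _ ((hmemR c).mpr h')
      · exact Finset.mem_union_right _ (mem_applicants.mpr h')
    -- f1 : A' = Ch m A ∪ N
    have hf1 : A' = Ch m A ∪ N := by
      apply Finset.Subset.antisymm
      · intro c hcA'
        by_cases hAR : c ∈ A ∪ R
        · exact Finset.mem_union_left _ (hb c hcA' hAR)
        · exact Finset.mem_union_right _ (Finset.mem_sdiff.mpr ⟨hcA', hAR⟩)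
      · exact Finset.union_subset ha (fun c h => (Finset.mem_sdiff.mp h).1)
    -- f2 : A' ∪ R' = A ∪ R ∪ N
    have hf2 : A' ∪ R' = A ∪ R ∪ N := by
      apply Finset.Subset.antisymm
      · apply Finset.union_subset
        · intro c h
          by_cases hAR : c ∈ A ∪ R
          · exact Finset.mem_union_left _ hAR
          · exact Finset.mem_union_right _ (Finset.mem_sdiff.mpr ⟨h, hAR⟩)
        · intro c h
          rcases Finset.mem_union.mp (he h) with h' | h'
          · exact Finset.mem_union_left _ (Finset.mem_union_right _ h')
          · exact Finset.mem_union_left _ (Finset.mem_union_left _ h')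
      · apply Finset.union_subset
        · apply Finset.union_subset
          · intro c h
            rcases Finset.mem_union.mp (hd h) with h' | h'
            · exact Finset.mem_union_left _ h'
            · exact Finset.mem_union_right _ h'
          · exact fun c h => Finset.mem_union_right _ (hc h)
        · exact fun c h => Finset.mem_union_left _ (Finset.mem_sdiff.mp h).1
    -- conclude
    have hBC : A' ⊆ A ∪ R ∪ N := by
      rw [hf1]
      exact Finset.union_subset
        (((hchoice m A).trans (Finset.subset_union_left)).trans
          (Finset.union_subset_union_left Finset.subset_union_left))
        Finset.subset_union_right
    have hCB : Ch m (A ∪ R ∪ N) ⊆ A' := by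
      intro d hdCh
      have hdC : d ∈ A ∪ R ∪ N := hchoice m _ hdCh
      rcases Finset.mem_union.mp hdC with hAR | hN
      · have : d ∈ Ch m (A ∪ R) :=
          hsub m (A ∪ R ∪ N) (A ∪ R) d hdCh hAR Finset.subset_union_left
        rw [ih] at this
        rw [hf1]; exact Finset.mem_union_left _ this
      · rw [hf1]; exact Finset.mem_union_right _ hN
    have hmain : Ch m A' = Ch m (A ∪ R ∪ N) :=
      ch_eq_of_subset Ch hirc m (A ∪ R ∪ N) A' hBC hCB
    rw [← hf2] at hmain
    exact hmain.symm

variable [Fintype β]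

/-- After enough rounds, DA reaches a fixed point. -/
lemma da_fixed (Ch : β → Finset α → Finset α) (prefs : α → List β) :
    daRound Ch prefs (daRej Ch prefs) = daRej Ch prefs := by
  set f : (α → Finset β) → (α → Finset β) := daRound Ch prefs with hf
  set x0 : α → Finset β := fun _ => ∅ with hx0
  set N : ℕ := Fintype.card α * Fintype.card β with hN
  set meas : (α → Finset β) → ℕ := fun r => ∑ c, (r c).card with hmeas
  have hstep : ∀ r : α → Finset β, f r ≠ r → meas r < meas (f r) := by
    intro r hne
    have : ∃ c, f r c ≠ r c := by
      by_contra h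
      push_neg at h
      exact hne (funext h)
    obtain ⟨c, hcne⟩ := this
    refine Finset.sum_lt_sum (fun i _ => Finset.card_le_card (rej_sub_daRound Ch prefs r i))
      ⟨c, Finset.mem_univ c, Finset.card_lt_card ?_⟩
    exact HasSubset.Subset.ssubset_of_ne (rej_sub_daRound Ch prefs r c) (Ne.symm hcne)
  have hbound : ∀ r : α → Finset β, meas r ≤ N := by
    intro r
    calc meas r ≤ ∑ _c : α, Fintype.card β :=
          Finset.sum_le_sum fun i _ => Finset.card_le_univ _
      _ = N := by simp [hN, mul_comm]
  have hgrow : ∀ k : ℕ, (∀ j < k, f (f^[j] x0) ≠ f^[j] x0) → k ≤ meas (f^[k] x0) := by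
    intro k
    induction k with
    | zero => intro _; exact Nat.zero_le _
    | succ k ihk =>
      intro h
      have h1 : k ≤ meas (f^[k] x0) := ihk fun j hj => h j (Nat.lt_succ_of_lt hj)
      have h2 : meas (f^[k] x0) < meas (f (f^[k] x0)) :=
        hstep _ (h k (Nat.lt_succ_self k))
      rw [Function.iterate_succ_apply']
      omega
  have hex : ∃ j < N + 1, f (f^[j] x0) = f^[j] x0 := by
    by_contra h
    push_neg at h
    have := hgrow (N + 1) fun j hj => h j hj
    have := hbound (f^[N + 1] x0)
    omega
  obtain ⟨j, hj, hfix⟩ := hex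
  have heq : f^[N + 1] x0 = f^[j] x0 := by
    have : N + 1 = (N + 1 - j) + j := by omega
    rw [this, Function.iterate_add_apply]
    exact Function.iterate_fixed hfix (N + 1 - j)
  show f (f^[N + 1] x0) = f^[N + 1] x0
  rw [heq, hfix]

lemma da_all_chosen (Ch : β → Finset α → Finset α) (prefs : α → List β) (m : β) :
    applicants prefs (daRej Ch prefs) m ⊆
      Ch m (applicants prefs (daRej Ch prefs) m) := by
  intro c hc
  have happ : applyTo prefs (daRej Ch prefs) c = some m := mem_applicants.mp hc
  by_contra hn
  have h1 : daRound Ch prefs (daRej Ch prefs) c = insert m (daRej Ch prefs c) :=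
    daRound_of_rejected happ hn
  have h2 := congrFun (da_fixed Ch prefs) c
  rw [h1] at h2
  exact applyTo_not_rej happ (h2 ▸ Finset.mem_insert_self m _)

end DAP


/-- With substitutable, IRC choice functions, rejections in DA are final:
a candidate rejected by an institution in some round is also rejected from the
(`c`-augmented) applicant pools that this institution faces in all later rounds;
consequently, reinstating all rejected applications at the end does not change the
institution's choice, and no blocking pair involves a candidate and an institution that
rejected her. -/
theorem da_rejections_final {α β : Type*} [Fintype α] [DecidableEq α]
    [Fintype β] [DecidableEq β]
    (Ch : β → Finset α → Finset α) (prefs : α → List β)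
    (hchoice : ∀ m (C : Finset α), Ch m C ⊆ C)
    (hnodup : ∀ c, (prefs c).Nodup)
    (hsub : ∀ m (C C' : Finset α) (c : α), c ∈ Ch m C → c ∈ C' → C' ⊆ C → c ∈ Ch m C')
    (hirc : ∀ m (C : Finset α) (c : α), c ∈ C → c ∉ Ch m C → Ch m (C.erase c) = Ch m C) :
    (∀ (c : α) (m : β) (k k' : ℕ), k ≤ k' →
        m ∈ ((daRound Ch prefs)^[k] fun _ => ∅) c →
        c ∉ Ch m (insert c (applicants prefs ((daRound Ch prefs)^[k'] fun _ => ∅) m))) ∧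
    (∀ m, Ch m (assignedTo (daMatch Ch prefs) m ∪
          (Finset.univ.filter fun c => m ∈ daRej Ch prefs c)) =
        assignedTo (daMatch Ch prefs) m) ∧
    (∀ c m, m ∈ daRej Ch prefs c → ¬ Blocks Ch prefs (daMatch Ch prefs) c m) := by
  classical
  have part1 : ∀ (c : α) (m : β) (k k' : ℕ), k ≤ k' →
      m ∈ ((daRound Ch prefs)^[k] fun _ => ∅) c →
      c ∉ Ch m (insert c (applicants prefs ((daRound Ch prefs)^[k'] fun _ => ∅) m)) := by
    intro c m k k' hkk' hm
    have hm' : m ∈ ((daRound Ch prefs)^[k'] fun _ => ∅) c :=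
      DAP.rk_mono Ch prefs c hkk' hm
    set rej : α → Finset β := (daRound Ch prefs)^[k'] fun _ => ∅ with hrejdef
    set A : Finset α := applicants prefs rej m with hA
    set R : Finset α := Finset.univ.filter fun c => m ∈ rej c with hR
    have hcR : c ∈ R := by simp [hR, hm']
    have hcA : c ∉ A := fun h => DAP.applyTo_not_rej (DAP.mem_applicants.mp h) hm'
    have hinv : Ch m (A ∪ R) = Ch m A :=
      DAP.da_invariant Ch prefs hchoice hsub hirc k' m
    have heq : Ch m (insert c A) = Ch m (A ∪ R) := by
      refine DAP.ch_eq_of_subset Ch hirc m (A ∪ R) (insert c A) ?_ ?_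
      · exact Finset.insert_subset (Finset.mem_union_right _ hcR) Finset.subset_union_left
      · rw [hinv]
        exact (hchoice m A).trans (Finset.subset_insert _ _)
    intro hcCh
    rw [heq, hinv] at hcCh
    exact hcA (hchoice m A hcCh)
  have hassigned : ∀ m : β, assignedTo (daMatch Ch prefs) m =
      applicants prefs (daRej Ch prefs) m := fun m => rfl
  have part2 : ∀ m, Ch m (assignedTo (daMatch Ch prefs) m ∪
      (Finset.univ.filter fun c => m ∈ daRej Ch prefs c)) =
      assignedTo (daMatch Ch prefs) m := by
    intro m
    rw [hassigned m]
    have hfix : Ch m (applicants prefs (daRej Ch prefs) m) =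
        applicants prefs (daRej Ch prefs) m :=
      Finset.Subset.antisymm (hchoice m _) (DAP.da_all_chosen Ch prefs m)
    have hinv := DAP.da_invariant Ch prefs hchoice hsub hirc
      (Fintype.card α * Fintype.card β + 1) m
    rw [show ((daRound Ch prefs)^[Fintype.card α * Fintype.card β + 1] fun _ => ∅)
        = daRej Ch prefs from rfl] at hinv
    rw [hinv, hfix]
  refine ⟨part1, part2, ?_⟩
  intro c m hm hblock
  obtain ⟨_, hb⟩ := hblock
  rw [hassigned m] at hb
  exact part1 c m (Fintype.card α * Fintype.card β + 1)
    (Fintype.card α * Fintype.card β + 1) le_rfl hm hb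
end

section
/- In the absence of minimum targets, if populations are laminar then for any two candidate sets C' ⊆ C, the greedy max-quota choice function satisfies |Ch(C')| ≤ |Ch(C)| (cardinal monotonicity), obtained by iterating the single-removal law of aggregate demand. -/
open PMA

section Aux

variable {α : Type*} [DecidableEq α]

/-- Feasibility is downward closed. -/
lemma feasible_anti {maxQ : List (Pop α)} {S T : Finset α} (h : S ⊆ T)
    (hT : Feasible maxQ T) : Feasible maxQ S := fun q hq =>
  le_trans (Finset.card_le_card (Finset.inter_subset_inter h (subset_refl _))) (hT q hq)

lemma subset_pass2 (maxQ : List (Pop α)) :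
    ∀ (L : List α) (S : Finset α), S ⊆ pass2 maxQ L S
  | [], _ => subset_rfl
  | c :: rest, S => by
    rw [pass2]
    split
    · exact (Finset.subset_insert c S).trans (subset_pass2 maxQ rest _)
    · exact subset_pass2 maxQ rest S

lemma pass2_subset (maxQ : List (Pop α)) {C : Finset α} :
    ∀ (L : List α) (S : Finset α), (∀ c ∈ L, c ∈ C) → S ⊆ C → pass2 maxQ L S ⊆ C
  | [], _, _, hS => hS
  | c :: rest, S, hL, hS => by
    rw [pass2]
    split
    · exact pass2_subset maxQ rest _ (fun d hd => hL d (List.mem_cons_of_mem _ hd))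
        (Finset.insert_subset (hL c List.mem_cons_self) hS)
    · exact pass2_subset maxQ rest S (fun d hd => hL d (List.mem_cons_of_mem _ hd)) hS

lemma feasible_pass2 (maxQ : List (Pop α)) :
    ∀ (L : List α) (S : Finset α), Feasible maxQ S → Feasible maxQ (pass2 maxQ L S)
  | [], _, hS => hS
  | c :: rest, S, hS => by
    rw [pass2]
    split
    · next h => exact feasible_pass2 maxQ rest _ h
    · exact feasible_pass2 maxQ rest S hS

/-- Every candidate on the list is either accepted, or cannot be feasibly added at the end. -/
lemma pass2_maximal (maxQ : List (Pop α)) :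
    ∀ (L : List α) (S : Finset α), ∀ c ∈ L,
      c ∈ pass2 maxQ L S ∨ ¬ Feasible maxQ (insert c (pass2 maxQ L S))
  | [], _, c, hc => absurd hc List.not_mem_nil
  | b :: rest, S, c, hc => by
    rcases List.mem_cons.mp hc with rfl | hc
    · rw [pass2]
      split
      · exact Or.inl (subset_pass2 maxQ rest _ (Finset.mem_insert_self c S))
      · next h =>
        refine Or.inr fun hfeas => h ?_
        exact feasible_anti (Finset.insert_subset_insert c (subset_pass2 maxQ rest S)) hfeas
    · rw [pass2]
      split
      · exact pass2_maximal maxQ rest _ c hc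
      · exact pass2_maximal maxQ rest S c hc

/-- Augmentation property for laminar maximum quotas. -/
lemma laminar_augment {maxQ : List (Pop α)} (hlam : Laminar maxQ)
    {S T : Finset α} (hS : Feasible maxQ S) (hT : Feasible maxQ T)
    (hcard : S.card < T.card) :
    ∃ t ∈ T, t ∉ S ∧ Feasible maxQ (insert t S) := by
  by_contra hcon
  push_neg at hcon
  -- every element of `T \ S` lies in a tight population
  have htight : ∀ t ∈ T \ S, ∃ q ∈ maxQ, t ∈ q.1 ∧ q.2 ≤ (S ∩ q.1).card := by
    intro t ht
    rw [Finset.mem_sdiff] at ht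
    have h1 := hcon t ht.1 ht.2
    rw [Feasible] at h1
    push_neg at h1
    obtain ⟨q, hq, hgt⟩ := h1
    by_cases htq : t ∈ q.1
    · refine ⟨q, hq, htq, ?_⟩
      rw [Finset.insert_inter_of_mem htq, Finset.card_insert_of_notMem (by simp [ht.2])] at hgt
      omega
    · exfalso
      have : insert t S ∩ q.1 = S ∩ q.1 := by
        ext x; simp only [Finset.mem_inter, Finset.mem_insert]
        constructor
        · rintro ⟨rfl | hx, hx2⟩
          · exact absurd hx2 htq
          · exact ⟨hx, hx2⟩
        · rintro ⟨hx, hx2⟩; exact ⟨Or.inr hx, hx2⟩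
      rw [this] at hgt
      exact absurd (hS q hq) (not_le.mpr hgt)
  -- the finset of tight population sets
  set Q : Finset (Finset α) :=
    (maxQ.toFinset.filter fun q => q.2 ≤ (S ∩ q.1).card).image Prod.fst with hQdef
  have hmemQ : ∀ d, d ∈ Q ↔ ∃ q ∈ maxQ, q.2 ≤ (S ∩ q.1).card ∧ q.1 = d := by
    intro d
    simp only [hQdef, Finset.mem_image, Finset.mem_filter, List.mem_toFinset]
    constructor
    · rintro ⟨q, ⟨hq, hle⟩, rfl⟩; exact ⟨q, hq, hle, rfl⟩
    · rintro ⟨q, hq, hle, rfl⟩; exact ⟨q, ⟨hq, hle⟩, rfl⟩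
  have hQcard : ∀ d ∈ Q, (T ∩ d).card ≤ (S ∩ d).card := by
    intro d hd
    obtain ⟨q, hq, hle, rfl⟩ := (hmemQ d).mp hd
    exact le_trans (hT q hq) hle
  have hQlam : ∀ d ∈ Q, ∀ d' ∈ Q, Disjoint d d' ∨ d ⊆ d' ∨ d' ⊆ d := by
    intro d hd d' hd'
    obtain ⟨q, hq, _, rfl⟩ := (hmemQ d).mp hd
    obtain ⟨q', hq', _, rfl⟩ := (hmemQ d').mp hd'
    exact hlam q hq q' hq'
  -- maximal tight sets
  set D : Finset (Finset α) := Q.filter (fun d => ∀ d' ∈ Q, d ⊆ d' → d = d') with hDdef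
  have hDsub : D ⊆ Q := Finset.filter_subset _ _
  have hmax : ∀ d ∈ Q, ∃ m ∈ D, d ⊆ m := by
    intro d hd
    obtain ⟨m, hm, hmmax⟩ := (Q.filter (fun d' => d ⊆ d')).exists_max_image Finset.card
      ⟨d, Finset.mem_filter.mpr ⟨hd, subset_rfl⟩⟩
    rw [Finset.mem_filter] at hm
    refine ⟨m, Finset.mem_filter.mpr ⟨hm.1, fun d' hd' hsub => ?_⟩, hm.2⟩
    exact Finset.eq_of_subset_of_card_le hsub
      (hmmax d' (Finset.mem_filter.mpr ⟨hd', hm.2.trans hsub⟩))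
  have hDdisj : ∀ d ∈ D, ∀ d' ∈ D, d ≠ d' → Disjoint d d' := by
    intro d hd d' hd' hne
    rw [hDdef, Finset.mem_filter] at hd hd'
    rcases hQlam d hd.1 d' hd'.1 with h | h | h
    · exact h
    · exact absurd (hd.2 d' hd'.1 h) hne
    · exact absurd (hd'.2 d hd.1 h).symm hne
  -- covering
  have hcover : T \ S ⊆ D.biUnion (fun d => (T \ S) ∩ d) := by
    intro t ht
    obtain ⟨q, hq, htq, hle⟩ := htight t ht
    obtain ⟨m, hm, hsub⟩ := hmax q.1 ((hmemQ q.1).mpr ⟨q, hq, hle, rfl⟩)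
    exact Finset.mem_biUnion.mpr ⟨m, hm, Finset.mem_inter.mpr ⟨ht, hsub htq⟩⟩
  -- counting
  have h1 : (T \ S).card ≤ ∑ d ∈ D, ((T \ S) ∩ d).card := by
    refine le_trans (Finset.card_le_card hcover) ?_
    rw [Finset.card_biUnion]
    intro d hd d' hd' hne
    exact Finset.disjoint_of_subset_left Finset.inter_subset_right
      (Finset.disjoint_of_subset_right Finset.inter_subset_right (hDdisj d hd d' hd' hne))
  have h2 : ∀ d ∈ D, ((T \ S) ∩ d).card ≤ ((S \ T) ∩ d).card := by
    intro d hd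
    have hc := hQcard d (hDsub hd)
    have e1 : (T \ S) ∩ d = (T ∩ d) \ S := by
      ext x; simp only [Finset.mem_inter, Finset.mem_sdiff]; tauto
    have e2 : (S \ T) ∩ d = (S ∩ d) \ T := by
      ext x; simp only [Finset.mem_inter, Finset.mem_sdiff]; tauto
    have i1 := Finset.card_inter_add_card_sdiff (T ∩ d) S
    have i2 := Finset.card_inter_add_card_sdiff (S ∩ d) T
    have e3 : T ∩ d ∩ S = S ∩ d ∩ T := by
      ext x; simp only [Finset.mem_inter]; tauto
    have e3c : (T ∩ d ∩ S).card = (S ∩ d ∩ T).card := by rw [e3]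
    rw [e1, e2]
    omega
  have h3 : ∑ d ∈ D, ((S \ T) ∩ d).card ≤ (S \ T).card := by
    rw [← Finset.card_biUnion]
    · exact Finset.card_le_card (Finset.biUnion_subset.mpr fun d _ =>
        Finset.inter_subset_left)
    · intro d hd d' hd' hne
      exact Finset.disjoint_of_subset_left Finset.inter_subset_right
        (Finset.disjoint_of_subset_right Finset.inter_subset_right (hDdisj d hd d' hd' hne))
  have h4 : (T \ S).card ≤ (S \ T).card :=
    h1.trans ((Finset.sum_le_sum h2).trans h3)
  have i1 := Finset.card_inter_add_card_sdiff T S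
  have i2 := Finset.card_inter_add_card_sdiff S T
  have ec : (T ∩ S).card = (S ∩ T).card := by rw [Finset.inter_comm]
  omega

end Aux

/-- For laminar populations with maximum quotas only, the greedy choice
function is cardinally monotone: `C' ⊆ C` implies `|Ch(C')| ≤ |Ch(C)|`. -/
theorem greedy_cardinal_monotone {α : Type*} [DecidableEq α] [LinearOrder α]
    (maxQ : List (Pop α)) (hlam : Laminar maxQ)
    (C C' : Finset α) (hsub : C' ⊆ C) :
    (greedy maxQ C').card ≤ (greedy maxQ C).card := by
  have hfeas0 : Feasible maxQ (∅ : Finset α) := by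
    intro q hq; simp
  have hG : greedy maxQ C ⊆ C :=
    pass2_subset maxQ _ ∅ (fun c hc => (Finset.mem_sort _).mp hc) (Finset.empty_subset C)
  have hG' : greedy maxQ C' ⊆ C' :=
    pass2_subset maxQ _ ∅ (fun c hc => (Finset.mem_sort _).mp hc) (Finset.empty_subset C')
  have hGfeas : Feasible maxQ (greedy maxQ C) := feasible_pass2 maxQ _ ∅ hfeas0
  have hG'feas : Feasible maxQ (greedy maxQ C') := feasible_pass2 maxQ _ ∅ hfeas0
  by_contra hlt
  push_neg at hlt
  obtain ⟨t, htG', htG, hfeas⟩ := laminar_augment hlam hGfeas hG'feas hlt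
  rcases pass2_maximal maxQ (C.sort (· ≤ ·)) ∅ t
      ((Finset.mem_sort _).mpr (hsub (hG' htG'))) with h | h
  · exact htG h
  · exact h hfeas
end

section
/- For the greedy max-quota choice function with laminar populations, the matching produced by candidate-proposing DA is the candidate-optimal stable matching: every candidate weakly prefers her DA assignment to her assignment in any other stable matching. -/
open PMA

namespace PMAProof

open PMA Finset

variable {α : Type*} [DecidableEq α]

lemma feasible_mono {maxQ : List (Pop α)} {S T : Finset α} (h : S ⊆ T)
    (hT : Feasible maxQ T) : Feasible maxQ S := fun q hq =>
  le_trans (Finset.card_le_card (Finset.inter_subset_inter_right h)) (hT q hq)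

lemma feasible_empty (maxQ : List (Pop α)) : Feasible maxQ (∅ : Finset α) := by
  intro q hq; simp

lemma subset_pass2 (maxQ : List (Pop α)) : ∀ (L : List α) (S : Finset α), S ⊆ pass2 maxQ L S := by
  intro L
  induction L with
  | nil => intro S; simp [pass2]
  | cons c rest ih =>
    intro S
    simp only [pass2]
    split
    · exact (Finset.subset_insert _ _).trans (ih _)
    · exact ih _

lemma pass2_subset (maxQ : List (Pop α)) :
    ∀ (L : List α) (S : Finset α), pass2 maxQ L S ⊆ S ∪ L.toFinset := by
  intro L
  induction L with
  | nil => intro S; simp [pass2]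
  | cons c rest ih =>
    intro S
    simp only [pass2]
    split
    · refine (ih _).trans ?_
      intro x hx
      rcases Finset.mem_union.1 hx with hx | hx
      · rcases Finset.mem_insert.1 hx with rfl | hx
        · simp
        · exact Finset.mem_union_left _ hx
      · simp only [List.toFinset_cons, Finset.mem_union, Finset.mem_insert]
        right; right; exact hx
    · refine (ih _).trans (Finset.union_subset_union_right ?_)
      simp

lemma not_mem_pass2 (maxQ : List (Pop α)) {c : α} :
    ∀ {L : List α} {S : Finset α}, c ∉ S → c ∉ L → c ∉ pass2 maxQ L S := by
  intro L
  induction L with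
  | nil => intro S h _; simpa [pass2]
  | cons d rest ih =>
    intro S hS hL
    have hcd : c ≠ d := fun h => hL (h ▸ List.mem_cons_self (a := d) (l := rest))
    have hrest : c ∉ rest := fun h => hL (List.mem_cons_of_mem _ h)
    simp only [pass2]
    split
    · exact ih (by simp [Finset.mem_insert, hcd, hS]) hrest
    · exact ih hS hrest

lemma pass2_feasible (maxQ : List (Pop α)) :
    ∀ (L : List α) {S : Finset α}, Feasible maxQ S → Feasible maxQ (pass2 maxQ L S) := by
  intro L
  induction L with
  | nil => intro S h; simpa [pass2]
  | cons c rest ih =>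
    intro S hS
    simp only [pass2]
    split
    · exact ih ‹_›
    · exact ih hS

lemma pass2_rejected (maxQ : List (Pop α)) {c : α} :
    ∀ {L : List α} {S : Finset α}, c ∈ L → c ∉ pass2 maxQ L S →
      ¬ Feasible maxQ (insert c (pass2 maxQ L S)) := by
  intro L
  induction L with
  | nil => intro S h; simp at h
  | cons d rest ih =>
    intro S hL hout
    by_cases hf : Feasible maxQ (insert d S)
    · simp only [pass2, if_pos hf] at hout ⊢
      rcases List.mem_cons.1 hL with rfl | hrest
      · exact absurd ((subset_pass2 _ _ _) (Finset.mem_insert_self _ _)) hout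
      · exact ih hrest hout
    · simp only [pass2, if_neg hf] at hout ⊢
      rcases List.mem_cons.1 hL with rfl | hrest
      · intro h2
        exact hf (feasible_mono (Finset.insert_subset_insert _ (subset_pass2 _ _ _)) h2)
      · exact ih hrest hout

lemma pass2_append (maxQ : List (Pop α)) :
    ∀ (L1 L2 : List α) (S : Finset α),
      pass2 maxQ (L1 ++ L2) S = pass2 maxQ L2 (pass2 maxQ L1 S) := by
  intro L1
  induction L1 with
  | nil => intro L2 S; simp [pass2]
  | cons c rest ih =>
    intro L2 S
    simp only [List.cons_append, pass2]
    split <;> exact ih _ _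

end PMAProof
namespace PMAProof

open PMA Finset

variable {α : Type*} [DecidableEq α]

/-- Adding an element fails feasibility iff some quota containing it is tight. -/
lemma not_feasible_insert {maxQ : List (Pop α)} {S : Finset α} {x : α}
    (hS : Feasible maxQ S) (hx : x ∉ S) (h : ¬ Feasible maxQ (insert x S)) :
    ∃ q ∈ maxQ, x ∈ q.1 ∧ q.2 ≤ (S ∩ q.1).card := by
  simp only [Feasible, not_forall] at h
  obtain ⟨q, hq, hcard⟩ := h
  push_neg at hcard
  by_cases hxq : x ∈ q.1
  · refine ⟨q, hq, hxq, ?_⟩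
    have : insert x S ∩ q.1 = insert x (S ∩ q.1) := by
      ext y; simp only [Finset.mem_inter, Finset.mem_insert]
      constructor
      · rintro ⟨rfl | hy, hy2⟩
        · exact Or.inl rfl
        · exact Or.inr ⟨hy, hy2⟩
      · rintro (rfl | ⟨h1, h2⟩)
        · exact ⟨Or.inl rfl, hxq⟩
        · exact ⟨Or.inr h1, h2⟩
    rw [this, Finset.card_insert_of_notMem (fun hc => hx (Finset.mem_inter.1 hc).1)] at hcard
    omega
  · exfalso
    have : insert x S ∩ q.1 = S ∩ q.1 := by
      ext y; simp only [Finset.mem_inter, Finset.mem_insert]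
      constructor
      · rintro ⟨rfl | hy, hy2⟩
        · exact absurd hy2 hxq
        · exact ⟨hy, hy2⟩
      · rintro ⟨h1, h2⟩; exact ⟨Or.inr h1, h2⟩
    rw [this] at hcard
    exact absurd (hS q hq) (by omega)

/-- Exchange property for laminar quota families. -/
lemma laminar_exchange {maxQ : List (Pop α)} (hlam : Laminar maxQ) {S T : Finset α}
    (hS : Feasible maxQ S) (hT : Feasible maxQ T) (hcard : S.card < T.card) :
    ∃ x ∈ T, x ∉ S ∧ Feasible maxQ (insert x S) := by
  by_contra hno
  push_neg at hno
  -- every x in T \ S lies in a tight quota set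
  have htight : ∀ x ∈ T \ S, ∃ q ∈ maxQ, x ∈ q.1 ∧ q.2 ≤ (S ∩ q.1).card := by
    intro x hx
    rw [Finset.mem_sdiff] at hx
    exact not_feasible_insert hS hx.2 (hno x hx.1 hx.2)
  -- the tight quotas containing a given point, as a finset
  classical
  -- for x in T \ S, choose a tight quota set of maximal cardinality containing x
  have hchoice : ∀ x ∈ T \ S, ∃ q ∈ maxQ, x ∈ q.1 ∧ q.2 ≤ (S ∩ q.1).card ∧
      ∀ q' ∈ maxQ, x ∈ q'.1 → q'.2 ≤ (S ∩ q'.1).card → q'.1.card ≤ q.1.card := by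
    intro x hx
    obtain ⟨q0, hq0, hxq0, ht0⟩ := htight x hx
    -- maximize card over the (finite, nonempty) list-filter
    set F : Finset (Pop α) := maxQ.toFinset.filter
      (fun q => x ∈ q.1 ∧ q.2 ≤ (S ∩ q.1).card) with hF
    have hne : F.Nonempty := ⟨q0, by simp [hF, List.mem_toFinset, hq0, hxq0, ht0]⟩
    obtain ⟨q, hqF, hmax⟩ := F.exists_max_image (fun q => q.1.card) hne
    simp only [hF, Finset.mem_filter, List.mem_toFinset] at hqF
    refine ⟨q, hqF.1, hqF.2.1, hqF.2.2, ?_⟩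
    intro q' hq' hx' ht'
    exact hmax q' (by simp [hF, List.mem_toFinset, hq', hx', ht'])
  choose! f hf1 hf2 hf3 hf4 using hchoice
  -- D : the collection of maximal tight sets used
  set D : Finset (Finset α) := (T \ S).image (fun x => (f x).1) with hD
  -- distinct members of D are disjoint
  have hdisj : ∀ P ∈ D, ∀ Q ∈ D, P ≠ Q → Disjoint P Q := by
    intro P hP Q hQ hne
    simp only [hD, Finset.mem_image] at hP hQ
    obtain ⟨x, hx, rfl⟩ := hP
    obtain ⟨y, hy, rfl⟩ := hQ
    rcases hlam _ (hf1 x hx) _ (hf1 y hy) with h | h | h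
    · exact h
    · -- (f x).1 ⊆ (f y).1 : then f y is a tight quota containing x, so cards force equality
      have hxy : x ∈ (f y).1 := h (hf2 x hx)
      have := hf4 x hx (f y) (hf1 y hy) hxy (hf3 y hy)
      exact absurd (Finset.eq_of_subset_of_card_le h this) hne
    · have hyx : y ∈ (f x).1 := h (hf2 y hy)
      have := hf4 y hy (f x) (hf1 x hx) hyx (hf3 x hx)
      exact absurd (Finset.eq_of_subset_of_card_le h this).symm hne
  -- per-set count comparison
  have hcount : ∀ P ∈ D, (T ∩ P).card ≤ (S ∩ P).card := by
    intro P hP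
    simp only [hD, Finset.mem_image] at hP
    obtain ⟨x, hx, rfl⟩ := hP
    calc (T ∩ (f x).1).card ≤ (f x).2 := hT _ (hf1 x hx)
    _ ≤ (S ∩ (f x).1).card := hf3 x hx
  -- U : union of the maximal tight sets
  set U : Finset α := D.biUnion id with hU
  have hTSU : T \ S ⊆ U := by
    intro x hx
    exact Finset.mem_biUnion.2 ⟨(f x).1, Finset.mem_image_of_mem _ hx, hf2 x hx⟩
  -- counting
  have h1 : (T ∩ U).card ≤ (S ∩ U).card := by
    have hTU : T ∩ U = D.biUnion (fun P => T ∩ P) := by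
      ext z
      simp only [hU, Finset.mem_inter, Finset.mem_biUnion, id]
      constructor
      · rintro ⟨h1, P, hP, h2⟩; exact ⟨P, hP, h1, h2⟩
      · rintro ⟨P, hP, h1, h2⟩; exact ⟨h1, P, hP, h2⟩
    have hSU : S ∩ U = D.biUnion (fun P => S ∩ P) := by
      ext z
      simp only [hU, Finset.mem_inter, Finset.mem_biUnion, id]
      constructor
      · rintro ⟨h1, P, hP, h2⟩; exact ⟨P, hP, h1, h2⟩
      · rintro ⟨P, hP, h1, h2⟩; exact ⟨h1, P, hP, h2⟩
    rw [hTU, hSU,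
      Finset.card_biUnion (fun P hP Q hQ hne =>
        Finset.disjoint_of_subset_left Finset.inter_subset_right
          (Finset.disjoint_of_subset_right Finset.inter_subset_right (hdisj P hP Q hQ hne))),
      Finset.card_biUnion (fun P hP Q hQ hne =>
        Finset.disjoint_of_subset_left Finset.inter_subset_right
          (Finset.disjoint_of_subset_right Finset.inter_subset_right (hdisj P hP Q hQ hne)))]
    exact Finset.sum_le_sum hcount
  have h2 : (T \ U).card ≤ (S \ U).card := by
    apply Finset.card_le_card
    intro x hx
    rw [Finset.mem_sdiff] at hx ⊢
    refine ⟨?_, hx.2⟩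
    by_contra hxS
    exact hx.2 (hTSU (Finset.mem_sdiff.2 ⟨hx.1, hxS⟩))
  have hTc : (T ∩ U).card + (T \ U).card = T.card := Finset.card_inter_add_card_sdiff T U
  have hSc : (S ∩ U).card + (S \ U).card = S.card := Finset.card_inter_add_card_sdiff S U
  omega

end PMAProof
namespace PMAProof

open PMA Finset

variable {α : Type*} [DecidableEq α]

/-- Extend a feasible subset of `A` to a maximal feasible subset of `A`. -/
lemma exists_maximal_feasible (maxQ : List (Pop α)) {S A : Finset α}
    (hS : Feasible maxQ S) (hSA : S ⊆ A) :
    ∃ B, S ⊆ B ∧ B ⊆ A ∧ Feasible maxQ B ∧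
      ∀ x ∈ A, x ∉ B → ¬ Feasible maxQ (insert x B) := by
  classical
  set F : Finset (Finset α) := A.powerset.filter (fun B => S ⊆ B ∧ Feasible maxQ B) with hF
  have hne : F.Nonempty := ⟨S, by simp [hF, Finset.mem_powerset, hSA, hS]⟩
  obtain ⟨B, hBF, hmax⟩ := F.exists_max_image Finset.card hne
  simp only [hF, Finset.mem_filter, Finset.mem_powerset] at hBF
  refine ⟨B, hBF.2.1, hBF.1, hBF.2.2, ?_⟩
  intro x hxA hxB hfeas
  have hmem : insert x B ∈ F := by
    simp only [hF, Finset.mem_filter, Finset.mem_powerset]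
    exact ⟨Finset.insert_subset hxA hBF.1, hBF.2.1.trans (Finset.subset_insert _ _), hfeas⟩
  have := hmax _ hmem
  rw [Finset.card_insert_of_notMem hxB] at this
  omega

/-- Any feasible subset of `A` is no larger than a maximal feasible subset of `A`. -/
lemma card_le_of_maximal {maxQ : List (Pop α)} (hlam : Laminar maxQ) {A S T : Finset α}
    (hS : Feasible maxQ S) (hSA : S ⊆ A)
    (hSmax : ∀ x ∈ A, x ∉ S → ¬ Feasible maxQ (insert x S))
    (hT : Feasible maxQ T) (hTA : T ⊆ A) : T.card ≤ S.card := by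
  by_contra h
  push_neg at h
  obtain ⟨x, hxT, hxS, hfeas⟩ := laminar_exchange hlam hS hT h
  exact hSmax x (hTA hxT) hxS hfeas

/-- If `c ∉ A` can be added to a maximal feasible subset of `A`, it can be added to
any feasible subset of `A`. -/
lemma feasible_insert_of_basis {maxQ : List (Pop α)} (hlam : Laminar maxQ)
    {A S S' : Finset α} {c : α}
    (hS : Feasible maxQ S) (hSA : S ⊆ A)
    (hSmax : ∀ x ∈ A, x ∉ S → ¬ Feasible maxQ (insert x S))
    (hc : Feasible maxQ (insert c S)) (hcA : c ∉ A)
    (hS' : Feasible maxQ S') (hS'A : S' ⊆ A) :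
    Feasible maxQ (insert c S') := by
  obtain ⟨B, hS'B, hBA, hBfeas, hBmax⟩ :=
    exists_maximal_feasible maxQ hS' (hS'A.trans (Finset.subset_insert c A))
  by_cases hcB : c ∈ B
  · exact feasible_mono (Finset.insert_subset hcB hS'B) hBfeas
  · exfalso
    have hBsubA : B ⊆ A := by
      intro x hx
      rcases Finset.mem_insert.1 (hBA hx) with rfl | h
      · exact absurd hx hcB
      · exact h
    -- B is maximal feasible in insert c A, so card (insert c S) ≤ card B
    have h1 : (insert c S).card ≤ B.card :=
      card_le_of_maximal hlam hBfeas hBA hBmax hc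
        (Finset.insert_subset_insert _ hSA)
    have h2 : B.card ≤ S.card := card_le_of_maximal hlam hS hSA hSmax hBfeas hBsubA
    rw [Finset.card_insert_of_notMem (fun h => hcA (hSA h))] at h1
    omega

end PMAProof
namespace PMAProof

open PMA Finset

variable {α : Type*} [DecidableEq α]

variable {maxQ : List (Pop α)} {order : List α}

lemma greedyL_subset (maxQ : List (Pop α)) (order : List α) (C : Finset α) :
    greedyL maxQ order C ⊆ C := by
  intro x hx
  have := pass2_subset maxQ (order.filter fun c => decide (c ∈ C)) ∅ hx
  rcases Finset.mem_union.1 this with h | h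
  · simp at h
  · rw [List.mem_toFinset, List.mem_filter] at h
    simpa using h.2

lemma greedyL_feasible (maxQ : List (Pop α)) (order : List α) (C : Finset α) :
    Feasible maxQ (greedyL maxQ order C) :=
  pass2_feasible maxQ _ (feasible_empty maxQ)

lemma greedyL_maximal (hord : ∀ c : α, c ∈ order) {C : Finset α} {x : α}
    (hxC : x ∈ C) (hx : x ∉ greedyL maxQ order C) :
    ¬ Feasible maxQ (insert x (greedyL maxQ order C)) := by
  apply pass2_rejected
  · rw [List.mem_filter]
    exact ⟨hord x, by simpa using hxC⟩
  · exact hx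

/-- Decision characterization: given a split `order = L1 ++ c :: L2` with `c ∈ C`,
membership of `c` in the greedy choice is equivalent to feasibility at `c`'s turn. -/
lemma greedyL_mem_iff (hnd : order.Nodup) {C : Finset α} {c : α} {L1 L2 : List α}
    (hsplit : order = L1 ++ c :: L2) (hcC : c ∈ C) :
    c ∈ greedyL maxQ order C ↔
      Feasible maxQ (insert c (pass2 maxQ (L1.filter fun x => decide (x ∈ C)) ∅)) := by
  have hc1 : c ∉ L1 := by
    rw [hsplit] at hnd
    intro h
    exact (List.disjoint_of_nodup_append hnd) h List.mem_cons_self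
  have hc2 : c ∉ L2 := by
    rw [hsplit] at hnd
    have := (List.nodup_append.1 hnd).2.1
    exact (List.nodup_cons.1 this).1
  set P : α → Bool := fun x => decide (x ∈ C) with hP
  have hfilter : order.filter P = L1.filter P ++ c :: L2.filter P := by
    rw [hsplit, List.filter_append, List.filter_cons_of_pos (by simp [hP, hcC])]
  set S1 : Finset α := pass2 maxQ (L1.filter P) ∅ with hS1
  have hcS1 : c ∉ S1 := by
    rw [hS1]
    apply not_mem_pass2
    · simp
    · intro h; exact hc1 (List.mem_filter.1 h).1
  rw [greedyL, hfilter, pass2_append]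
  rw [← hS1]
  simp only [pass2]
  constructor
  · intro h
    by_contra hnf
    rw [if_neg hnf] at h
    exact not_mem_pass2 maxQ hcS1 (fun hm => hc2 (List.mem_filter.1 hm).1) h
  · intro hf
    rw [if_pos hf]
    exact subset_pass2 maxQ _ _ (Finset.mem_insert_self _ _)

/-- Substitutability of the greedy choice. -/
lemma greedyL_substitutes (hnd : order.Nodup) (hord : ∀ c : α, c ∈ order)
    {C C' : Finset α} {c : α} (hCC : C' ⊆ C) (hcC' : c ∈ C')
    (hc : c ∈ greedyL maxQ order C) (hlam : Laminar maxQ) :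
    c ∈ greedyL maxQ order C' := by
  obtain ⟨L1, L2, hsplit⟩ := List.append_of_mem (hord c)
  have hcC : c ∈ C := hCC hcC'
  rw [greedyL_mem_iff hnd hsplit hcC] at hc
  rw [greedyL_mem_iff hnd hsplit hcC']
  set A : Finset α := (L1.filter fun x => decide (x ∈ C)).toFinset with hA
  set S1 : Finset α := pass2 maxQ (L1.filter fun x => decide (x ∈ C)) ∅ with hS1
  set S1' : Finset α := pass2 maxQ (L1.filter fun x => decide (x ∈ C')) ∅ with hS1'
  have hc1 : c ∉ L1 := by
    rw [hsplit] at hnd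
    intro h
    exact (List.disjoint_of_nodup_append hnd) h List.mem_cons_self
  have hS1A : S1 ⊆ A := by
    intro x hx
    have := pass2_subset maxQ _ _ hx
    rcases Finset.mem_union.1 this with h | h
    · simp at h
    · exact h
  have hS1'A : S1' ⊆ A := by
    intro x hx
    have := pass2_subset maxQ _ _ hx
    rcases Finset.mem_union.1 this with h | h
    · simp at h
    · rw [List.mem_toFinset, List.mem_filter] at h ⊢
      refine ⟨h.1, ?_⟩
      have := of_decide_eq_true h.2
      simp [hCC this]
  have hS1max : ∀ x ∈ A, x ∉ S1 → ¬ Feasible maxQ (insert x S1) := by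
    intro x hx hxS
    exact pass2_rejected maxQ (List.mem_toFinset.1 hx) hxS
  have hcA : c ∉ A := by
    intro h
    exact hc1 (List.mem_filter.1 (List.mem_toFinset.1 h)).1
  exact feasible_insert_of_basis hlam (pass2_feasible maxQ _ (feasible_empty maxQ))
    hS1A hS1max hc hcA (pass2_feasible maxQ _ (feasible_empty maxQ)) hS1'A

/-- IRC (irrelevance of rejected candidates) for the greedy choice. -/
lemma greedyL_irc {C T : Finset α}
    (hT : greedyL maxQ order C ⊆ T) (hTC : T ⊆ C) :
    greedyL maxQ order T = greedyL maxQ order C := by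
  set R : Finset α := greedyL maxQ order C with hR
  have key : ∀ (L : List α) (S : Finset α),
      pass2 maxQ (L.filter fun x => decide (x ∈ C)) S = R →
      pass2 maxQ (L.filter fun x => decide (x ∈ T)) S = R := by
    intro L
    induction L with
    | nil => intro S h; simpa using h
    | cons d rest ih =>
      intro S h
      by_cases hdC : d ∈ C
      · rw [List.filter_cons_of_pos (by simpa using hdC)] at h
        by_cases hdT : d ∈ T
        · rw [List.filter_cons_of_pos (by simpa using hdT)]
          simp only [pass2] at h ⊢
          split at h
          · rw [if_pos ‹_›]; exact ih _ h
          · rw [if_neg ‹_›]; exact ih _ h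
        · rw [List.filter_cons_of_neg (by simpa using hdT)]
          simp only [pass2] at h
          split at h
          · exfalso
            apply hdT
            apply hT
            rw [← h]
            exact subset_pass2 maxQ _ _ (Finset.mem_insert_self _ _)
          · exact ih _ h
      · rw [List.filter_cons_of_neg (by simpa using hdC)] at h
        rw [List.filter_cons_of_neg (by simp; exact fun hh => hdC (hTC hh))]
        exact ih _ h
  exact key order ∅ rfl

end PMAProof
namespace PMAProof

open PMA Finset

section DA

variable {α β : Type*} [Fintype α] [DecidableEq α] [Fintype β] [DecidableEq β]

lemma find?_indexOf_le {p : β → Bool} :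
    ∀ {l : List β} {a b : β}, l.find? p = some a → b ∈ l → p b = true →
      l.idxOf a ≤ l.idxOf b := by
  intro l
  induction l with
  | nil => intro a b h; simp at h
  | cons x xs ih =>
    intro a b h hb hpb
    cases hpx : p x with
    | true =>
      rw [List.find?_cons_of_pos (l := xs) hpx] at h
      cases h
      simp [List.idxOf_cons_self]
    | false =>
      rw [List.find?_cons_of_neg (l := xs) (by simp [hpx])] at h
      replace hpx : ¬ p x = true := by simp [hpx]
      have hax : x ≠ a := by
        rintro rfl
        exact hpx (List.find?_some h)
      have hbx : x ≠ b := by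
        rintro rfl
        exact hpx hpb
      have hbxs : b ∈ xs := by
        rcases List.mem_cons.1 hb with rfl | h2
        · exact absurd rfl hbx
        · exact h2
      rw [List.idxOf_cons_ne _ hax, List.idxOf_cons_ne _ hbx]
      exact Nat.succ_le_succ (ih h hbxs hpb)

variable {Ch : β → Finset α → Finset α} {prefs : α → List β} {rej : α → Finset β}

lemma applyTo_some {c : α} {m : β} (h : applyTo prefs rej c = some m) :
    m ∈ prefs c ∧ m ∉ rej c := by
  have h' : (prefs c).find? (fun m => decide (m ∉ rej c)) = some m := h
  have hp := List.find?_some h'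
  simp only [decide_eq_true_eq] at hp
  exact ⟨List.mem_of_find?_eq_some h', hp⟩

lemma applyTo_none {c : α} (h : applyTo prefs rej c = none) :
    ∀ m ∈ prefs c, m ∈ rej c := by
  intro m hm
  have h' : (prefs c).find? (fun m => decide (m ∉ rej c)) = none := h
  by_contra hr
  exact absurd (List.find?_eq_none.1 h' m hm (decide_eq_true hr)) (by simp)

lemma applyTo_le {c : α} {m m' : β} (h : applyTo prefs rej c = some m)
    (hm' : m' ∈ prefs c) (hr : m' ∉ rej c) :
    (prefs c).idxOf m ≤ (prefs c).idxOf m' := by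
  have h' : (prefs c).find? (fun m => decide (m ∉ rej c)) = some m := h
  exact find?_indexOf_le h' hm' (decide_eq_true hr)

lemma applyTo_rej_of_lt {c : α} {m m' : β} (h : applyTo prefs rej c = some m')
    (hm : m ∈ prefs c) (hlt : (prefs c).idxOf m < (prefs c).idxOf m') :
    m ∈ rej c := by
  by_contra hr
  exact absurd (applyTo_le h hm hr) (by omega)

lemma subset_daRound (c : α) : rej c ⊆ daRound Ch prefs rej c := by
  cases h : applyTo prefs rej c with
  | none => simp [daRound, h]
  | some m =>
    simp only [daRound, h]
    split
    · exact subset_rfl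
    · exact Finset.subset_insert _ _

lemma mem_daRound_iff {c : α} {m : β} :
    m ∈ daRound Ch prefs rej c ↔ m ∈ rej c ∨
      (applyTo prefs rej c = some m ∧ c ∉ Ch m (applicants prefs rej m)) := by
  cases h : applyTo prefs rej c with
  | none =>
    simp only [daRound, h]
    constructor
    · exact Or.inl
    · rintro (h1 | ⟨h1, _⟩)
      · exact h1
      · simp at h1
  | some m₀ =>
    simp only [daRound, h]
    split
    · rename_i hch
      constructor
      · exact Or.inl
      · rintro (h1 | ⟨h1, h2⟩)
        · exact h1
        · rw [Option.some_inj] at h1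
          subst h1
          exact absurd hch h2
    · rename_i hch
      rw [Finset.mem_insert]
      constructor
      · rintro (rfl | h1)
        · exact Or.inr ⟨rfl, hch⟩
        · exact Or.inl h1
      · rintro (h1 | ⟨h1, _⟩)
        · exact Or.inr h1
        · rw [Option.some_inj] at h1
          subst h1
          exact Or.inl rfl

lemma daRound_eq_of_chosen {c : α} {m : β} (h : applyTo prefs rej c = some m)
    (hch : c ∈ Ch m (applicants prefs rej m)) :
    daRound Ch prefs rej c = rej c := by
  simp only [daRound, h, if_pos hch]

/-- The DA rejection map reaches a fixed point within the prescribed iterations. -/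
lemma daRej_fixed (Ch : β → Finset α → Finset α) (prefs : α → List β) :
    daRound Ch prefs (daRej Ch prefs) = daRej Ch prefs := by
  classical
  set F := daRound Ch prefs with hF
  set μ : (α → Finset β) → ℕ := fun r => ∑ c : α, (r c).card with hμ
  have hbound : ∀ r, μ r ≤ Fintype.card α * Fintype.card β := by
    intro r
    calc μ r ≤ ∑ _c : α, Fintype.card β :=
          Finset.sum_le_sum (fun c _ => Finset.card_le_univ _)
    _ = Fintype.card α * Fintype.card β := by
          rw [Finset.sum_const, Finset.card_univ, smul_eq_mul]
  have hstep : ∀ r, F r ≠ r → μ r < μ (F r) := by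
    intro r hne
    have : ∃ c, r c ≠ F r c := by
      by_contra hall
      push_neg at hall
      exact hne (funext fun c => (hall c).symm)
    obtain ⟨c, hc⟩ := this
    apply Finset.sum_lt_sum
    · exact fun i _ => Finset.card_le_card (subset_daRound i)
    · exact ⟨c, Finset.mem_univ c,
        Finset.card_lt_card (Finset.ssubset_iff_subset_ne.2 ⟨subset_daRound c, hc⟩)⟩
  have key : ∀ n : ℕ, F (F^[n] (fun _ => ∅)) = F^[n] (fun _ => ∅) ∨
      n ≤ μ (F^[n] (fun _ => ∅)) := by
    intro n
    induction n with
    | zero => exact Or.inr (Nat.zero_le _)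
    | succ n ih =>
      rcases ih with hfix | hle
      · left
        rw [Function.iterate_succ_apply', hfix, hfix]
      · by_cases hfix : F (F^[n] (fun _ => ∅)) = F^[n] (fun _ => ∅)
        · left
          rw [Function.iterate_succ_apply', hfix, hfix]
        · right
          rw [Function.iterate_succ_apply']
          exact lt_of_le_of_lt hle (hstep _ hfix)
  have := key (Fintype.card α * Fintype.card β + 1)
  rcases this with hfix | hle
  · exact hfix
  · exact absurd (le_trans hle (hbound _)) (by omega)

end DA

end PMAProof
namespace PMAProof

open PMA Finset

section DA2

variable {α β : Type*} [Fintype α] [DecidableEq α] [Fintype β] [DecidableEq β]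

/-- Candidates rejected (so far) by institution `m`. -/
def rejSet (rej : α → Finset β) (m : β) : Finset α :=
  Finset.univ.filter fun c => m ∈ rej c

variable {Ch : β → Finset α → Finset α} {prefs : α → List β}

lemma applyTo_congr {rej rej' : α → Finset β} {c : α} (h : rej' c = rej c) :
    applyTo prefs rej' c = applyTo prefs rej c := by
  simp only [applyTo, h]

lemma mem_applicants {rej : α → Finset β} {c : α} {m : β} :
    c ∈ applicants prefs rej m ↔ applyTo prefs rej c = some m := by
  simp [applicants]

lemma mem_rejSet {rej : α → Finset β} {c : α} {m : β} :
    c ∈ rejSet rej m ↔ m ∈ rej c := by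
  simp [rejSet]

lemma applicants_disj_rejSet {rej : α → Finset β} {c : α} {m : β}
    (h : c ∈ applicants prefs rej m) : c ∉ rejSet rej m := by
  rw [mem_applicants] at h
  rw [mem_rejSet]
  exact (applyTo_some h).2

/-- One step of the cumulative-rejection invariant. -/
lemma inv_step
    (hchsub : ∀ m C, Ch m C ⊆ C)
    (hsub : ∀ (m : β) (C' C : Finset α) (c : α), C' ⊆ C → c ∈ C' → c ∈ Ch m C → c ∈ Ch m C')
    (hirc : ∀ (m : β) (T C : Finset α), Ch m C ⊆ T → T ⊆ C → Ch m T = Ch m C)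
    (rej : α → Finset β)
    (hinv : ∀ m, Ch m (applicants prefs rej m ∪ rejSet rej m) = Ch m (applicants prefs rej m))
    (m : β) :
    Ch m (applicants prefs (daRound Ch prefs rej) m ∪ rejSet (daRound Ch prefs rej) m) =
      Ch m (applicants prefs (daRound Ch prefs rej) m) := by
  classical
  set A := applicants prefs rej m with hA
  set R := rejSet rej m with hRdef
  set A' := applicants prefs (daRound Ch prefs rej) m with hA'
  set R' := rejSet (daRound Ch prefs rej) m with hR'
  set N := A' \ (A ∪ R) with hN
  have hRR' : R ⊆ R' := by
    intro c hc
    rw [mem_rejSet] at hc ⊢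
    exact subset_daRound c hc
  have hR'eq : ∀ c, c ∈ R' ↔ c ∈ R ∨ (c ∈ A ∧ c ∉ Ch m A) := by
    intro c
    rw [mem_rejSet, mem_daRound_iff, ← mem_rejSet (rej := rej), ← mem_applicants (rej := rej)]
  have hChA' : Ch m A ⊆ A' := by
    intro c hc
    have hcA : c ∈ A := hchsub m A hc
    rw [hA, mem_applicants] at hcA
    rw [hA', mem_applicants, applyTo_congr (daRound_eq_of_chosen hcA hc)]
    exact hcA
  have hA'sub : A' ⊆ Ch m A ∪ N := by
    intro c hc
    by_cases hc2 : c ∈ A ∪ R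
    · rcases Finset.mem_union.1 hc2 with hcA | hcR
      · by_cases hch : c ∈ Ch m A
        · exact Finset.mem_union_left _ hch
        · exfalso
          have : c ∈ R' := (hR'eq c).2 (Or.inr ⟨hcA, hch⟩)
          exact applicants_disj_rejSet hc this
      · exfalso
        exact applicants_disj_rejSet hc (hRR' hcR)
    · exact Finset.mem_union_right _ (Finset.mem_sdiff.2 ⟨hc, hc2⟩)
  have hunion : A' ∪ R' = A ∪ R ∪ N := by
    apply Finset.Subset.antisymm
    · intro c hc
      rcases Finset.mem_union.1 hc with hc | hc
      · rcases Finset.mem_union.1 (hA'sub hc) with hc2 | hc2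
        · exact Finset.mem_union_left _ (Finset.mem_union_left _ (hchsub m A hc2))
        · exact Finset.mem_union_right _ hc2
      · rcases (hR'eq c).1 hc with hc2 | hc2
        · exact Finset.mem_union_left _ (Finset.mem_union_right _ hc2)
        · exact Finset.mem_union_left _ (Finset.mem_union_left _ hc2.1)
    · intro c hc
      rcases Finset.mem_union.1 hc with hc | hc
      · rcases Finset.mem_union.1 hc with hc2 | hc2
        · by_cases hch : c ∈ Ch m A
          · exact Finset.mem_union_left _ (hChA' hch)
          · exact Finset.mem_union_right _ ((hR'eq c).2 (Or.inr ⟨hc2, hch⟩))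
        · exact Finset.mem_union_right _ (hRR' hc2)
      · exact Finset.mem_union_left _ ((Finset.mem_sdiff.1 hc).1)
  have hsub2 : Ch m (A ∪ R ∪ N) ⊆ A' := by
    intro x hx
    have hxmem : x ∈ A ∪ R ∪ N := hchsub m _ hx
    rcases Finset.mem_union.1 hxmem with hx2 | hx2
    · have : x ∈ Ch m (A ∪ R) :=
        hsub m (A ∪ R) (A ∪ R ∪ N) x Finset.subset_union_left hx2 hx
      rw [hinv m] at this
      exact hChA' this
    · exact (Finset.mem_sdiff.1 hx2).1
  have hA'big : A' ⊆ A ∪ R ∪ N := by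
    intro c hc
    have : c ∈ A' ∪ R' := Finset.mem_union_left _ hc
    rw [hunion] at this
    exact this
  calc Ch m (A' ∪ R') = Ch m (A ∪ R ∪ N) := by rw [hunion]
  _ = Ch m A' := (hirc m A' (A ∪ R ∪ N) hsub2 hA'big).symm

/-- The cumulative-rejection invariant holds along all DA iterations. -/
lemma inv_all
    (hchsub : ∀ m C, Ch m C ⊆ C)
    (hsub : ∀ (m : β) (C' C : Finset α) (c : α), C' ⊆ C → c ∈ C' → c ∈ Ch m C → c ∈ Ch m C')
    (hirc : ∀ (m : β) (T C : Finset α), Ch m C ⊆ T → T ⊆ C → Ch m T = Ch m C)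
    (n : ℕ) :
    ∀ m, Ch m (applicants prefs ((daRound Ch prefs)^[n] fun _ => ∅) m ∪
        rejSet ((daRound Ch prefs)^[n] fun _ => ∅) m) =
      Ch m (applicants prefs ((daRound Ch prefs)^[n] fun _ => ∅) m) := by
  induction n with
  | zero =>
    intro m
    have : rejSet (fun _ : α => (∅ : Finset β)) m = ∅ := by
      ext c; simp [rejSet]
    simp only [Function.iterate_zero, id]
    rw [this, Finset.union_empty]
  | succ n ih =>
    intro m
    rw [Function.iterate_succ_apply']
    exact inv_step hchsub hsub hirc _ ih m

end DA2

end PMAProof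
namespace PMAProof

open PMA Finset

section DA3

variable {α β : Type*} [Fintype α] [DecidableEq α] [Fintype β] [DecidableEq β]
variable {Ch : β → Finset α → Finset α} {prefs : α → List β}

lemma chosen_at_fixed {c : α} {m : β}
    (h : applyTo prefs (daRej Ch prefs) c = some m) :
    c ∈ Ch m (applicants prefs (daRej Ch prefs) m) := by
  by_contra hn
  have hmem : m ∈ daRound Ch prefs (daRej Ch prefs) c :=
    mem_daRound_iff.2 (Or.inr ⟨h, hn⟩)
  rw [congrFun (daRej_fixed Ch prefs) c] at hmem
  exact (applyTo_some h).2 hmem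

lemma assignedTo_daMatch (m : β) :
    assignedTo (daMatch Ch prefs) m = applicants prefs (daRej Ch prefs) m := by
  ext c
  exact Iff.rfl

lemma da_indivRational (hchsub : ∀ m C, Ch m C ⊆ C) :
    IndivRational Ch prefs (daMatch Ch prefs) := by
  constructor
  · intro c m h
    exact (applyTo_some h).1
  · intro m
    apply Finset.Subset.antisymm (hchsub m _)
    intro c hc
    rw [assignedTo_daMatch] at hc ⊢
    exact chosen_at_fixed (mem_applicants.1 hc)

lemma da_no_blocking
    (hchsub : ∀ m C, Ch m C ⊆ C)
    (hsub : ∀ (m : β) (C' C : Finset α) (c : α), C' ⊆ C → c ∈ C' → c ∈ Ch m C → c ∈ Ch m C')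
    (hirc : ∀ (m : β) (T C : Finset α), Ch m C ⊆ T → T ⊆ C → Ch m T = Ch m C)
    (c : α) (m : β) : ¬ Blocks Ch prefs (daMatch Ch prefs) c m := by
  rintro ⟨hpref, hch⟩
  set rej := daRej Ch prefs with hrej
  set A := applicants prefs rej m with hA
  set R := rejSet rej m with hR
  have hinv : Ch m (A ∪ R) = Ch m A := by
    rw [hA, hR, hrej]
    exact inv_all hchsub hsub hirc (Fintype.card α * Fintype.card β + 1) m
  -- m has rejected c
  have hmr : m ∈ rej c := by
    cases hmc : daMatch Ch prefs c with
    | none =>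
      rw [hmc] at hpref
      exact applyTo_none hmc m hpref
    | some m' =>
      rw [hmc] at hpref
      exact applyTo_rej_of_lt hmc hpref.1 hpref.2
  have hcR : c ∈ R := mem_rejSet.2 hmr
  have hcA : c ∉ A := by
    intro h
    have := mem_applicants.1 h
    have hmc : daMatch Ch prefs c = some m := this
    rw [hmc] at hpref
    exact absurd hpref.2 (by omega)
  rw [assignedTo_daMatch, ← hrej, ← hA] at hch
  have heq : Ch m (insert c A) = Ch m (A ∪ R) := by
    apply hirc
    · rw [hinv]
      exact (hchsub m A).trans (Finset.subset_insert _ _)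
    · exact Finset.insert_subset (Finset.mem_union_right _ hcR) Finset.subset_union_left
  rw [heq, hinv] at hch
  exact hcA (hchsub m A hch)

/-- No candidate is ever rejected by an institution she is matched to in a stable matching. -/
lemma ach_all
    (hchsub : ∀ m C, Ch m C ⊆ C)
    (hsub : ∀ (m : β) (C' C : Finset α) (c : α), C' ⊆ C → c ∈ C' → c ∈ Ch m C → c ∈ Ch m C')
    (hirc : ∀ (m : β) (T C : Finset α), Ch m C ⊆ T → T ⊆ C → Ch m T = Ch m C)
    (n : ℕ) :
    ∀ c m, m ∈ ((daRound Ch prefs)^[n] fun _ => ∅) c →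
      ∀ M, StableMatching Ch prefs M → M c ≠ some m := by
  induction n with
  | zero => intro c m hm; simp at hm
  | succ n ih =>
    intro c m hm M hMst hMc
    rw [Function.iterate_succ_apply'] at hm
    set rej := (daRound Ch prefs)^[n] fun _ => ∅ with hrej
    rw [mem_daRound_iff] at hm
    rcases hm with hm | ⟨happ, hnch⟩
    · exact ih c m hm M hMst hMc
    · set A := applicants prefs rej m with hA
      set Y := assignedTo M m with hY
      set Z := A ∪ Y with hZ
      have hcY : c ∈ Y := by
        rw [hY, assignedTo, Finset.mem_filter]
        exact ⟨Finset.mem_univ c, hMc⟩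
      have hcA : c ∈ A := mem_applicants.2 happ
      have star : ∀ c' ∈ A, c' ∉ Y → Prefers prefs c' m (M c') := by
        intro c' hc' hc'Y
        have happ' : applyTo prefs rej c' = some m := mem_applicants.1 hc'
        have hmp : m ∈ prefs c' := (applyTo_some happ').1
        cases hMc' : M c' with
        | none => exact hmp
        | some m₀ =>
          have hm₀ : m₀ ∈ prefs c' := hMst.1.1 c' m₀ hMc'
          have hm₀m : m₀ ≠ m := by
            rintro rfl
            apply hc'Y
            rw [hY, assignedTo, Finset.mem_filter]
            exact ⟨Finset.mem_univ c', hMc'⟩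
          have hnr : m₀ ∉ rej c' := fun hr => ih c' m₀ hr M hMst hMc'
          have hle := applyTo_le happ' hm₀ hnr
          refine ⟨hmp, lt_of_le_of_ne hle ?_⟩
          intro heq
          exact hm₀m ((List.idxOf_inj hm₀).1 heq.symm)
      have hChY : Ch m Y = Y := hMst.1.2 m
      have hcnZ : c ∉ Ch m Z := fun h =>
        hnch (hsub m A Z c Finset.subset_union_left hcA h)
      have hnotsub : ¬ Ch m Z ⊆ Y := by
        intro hss
        have := hirc m Y Z hss Finset.subset_union_right
        rw [hChY] at this
        exact hcnZ (this ▸ hcY)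
      obtain ⟨c', hc'Ch, hc'Y⟩ := Finset.not_subset.1 hnotsub
      have hc'Z : c' ∈ Z := hchsub m Z hc'Ch
      have hc'A : c' ∈ A := by
        rcases Finset.mem_union.1 hc'Z with h | h
        · exact h
        · exact absurd h hc'Y
      have hpref' := star c' hc'A hc'Y
      have hblock : c' ∈ Ch m (insert c' Y) :=
        hsub m (insert c' Y) Z c'
          (Finset.insert_subset hc'Z Finset.subset_union_right)
          (Finset.mem_insert_self _ _) hc'Ch
      exact hMst.2 c' m ⟨hpref', hblock⟩

end DA3

end PMAProof

open PMA PMAProof in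
theorem da_candidate_optimal' {α β : Type*} [Fintype α] [DecidableEq α]
    [Fintype β] [DecidableEq β]
    (order : β → List α) (maxQ : β → List (Pop α))
    (horder : ∀ m, (order m).Nodup ∧ ∀ c, c ∈ order m)
    (hlam : ∀ m, Laminar (maxQ m))
    (prefs : α → List β) (hnodup : ∀ c, (prefs c).Nodup) :
    StableMatching (fun m => greedyL (maxQ m) (order m)) prefs
        (daMatch (fun m => greedyL (maxQ m) (order m)) prefs) ∧
      ∀ M : α → Option β, StableMatching (fun m => greedyL (maxQ m) (order m)) prefs M →
        ∀ c, WeaklyPrefers prefs c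
          (daMatch (fun m => greedyL (maxQ m) (order m)) prefs c) (M c) := by
  classical
  set Ch : β → Finset α → Finset α := fun m => greedyL (maxQ m) (order m) with hCh
  have hchsub : ∀ (m : β) (C : Finset α), Ch m C ⊆ C := fun m C => greedyL_subset _ _ _
  have hsub : ∀ (m : β) (C' C : Finset α) (c : α),
      C' ⊆ C → c ∈ C' → c ∈ Ch m C → c ∈ Ch m C' :=
    fun m C' C c h1 h2 h3 => greedyL_substitutes (horder m).1 (horder m).2 h1 h2 h3 (hlam m)
  have hirc : ∀ (m : β) (T C : Finset α), Ch m C ⊆ T → T ⊆ C → Ch m T = Ch m C :=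
    fun m T C h1 h2 => greedyL_irc h1 h2
  have hach := ach_all (Ch := Ch) (prefs := prefs) hchsub hsub hirc
    (Fintype.card α * Fintype.card β + 1)
  have hdefr : daRej Ch prefs =
      ((daRound Ch prefs)^[Fintype.card α * Fintype.card β + 1] fun _ => ∅) := rfl
  refine ⟨⟨da_indivRational hchsub, fun c m => da_no_blocking hchsub hsub hirc c m⟩, ?_⟩
  intro M hM c
  cases hMc : M c with
  | none =>
    cases hd : daMatch Ch prefs c with
    | none => exact Or.inl rfl
    | some m =>
      refine Or.inr ⟨m, rfl, ?_⟩
      have hd' : applyTo prefs (daRej Ch prefs) c = some m := hd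
      exact (applyTo_some hd').1
  | some m =>
    have hm : m ∈ prefs c := hM.1.1 c m hMc
    have hnr : m ∉ daRej Ch prefs c := by
      intro hr
      rw [hdefr] at hr
      exact hach c m hr M hM hMc
    cases hd : daMatch Ch prefs c with
    | none =>
      have hd' : applyTo prefs (daRej Ch prefs) c = none := hd
      exact absurd (applyTo_none hd' m hm) hnr
    | some m' =>
      have hd' : applyTo prefs (daRej Ch prefs) c = some m' := hd
      have hle := applyTo_le hd' hm hnr
      by_cases hmm : m' = m
      · exact Or.inl (by rw [hmm])
      · refine Or.inr ⟨m', rfl, (applyTo_some hd').1, lt_of_le_of_ne hle ?_⟩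
        intro heq
        exact hmm ((List.idxOf_inj (applyTo_some hd').1).1 heq)

/-- With greedy max-quota choice functions arising from laminar populations
(and strict priority lists), candidate-proposing DA produces the candidate-optimal stable
matching: it is stable, and every candidate weakly prefers her DA assignment to her
assignment in any other stable matching. -/
theorem da_candidate_optimal {α β : Type*} [Fintype α] [DecidableEq α]
    [Fintype β] [DecidableEq β]
    (order : β → List α) (maxQ : β → List (Pop α))
    (horder : ∀ m, (order m).Nodup ∧ ∀ c, c ∈ order m)
    (hlam : ∀ m, Laminar (maxQ m))
    (prefs : α → List β) (hnodup : ∀ c, (prefs c).Nodup) :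
    StableMatching (fun m => greedyL (maxQ m) (order m)) prefs
        (daMatch (fun m => greedyL (maxQ m) (order m)) prefs) ∧
      ∀ M : α → Option β, StableMatching (fun m => greedyL (maxQ m) (order m)) prefs M →
        ∀ c, WeaklyPrefers prefs c
          (daMatch (fun m => greedyL (maxQ m) (order m)) prefs c) (M c) := by
  exact da_candidate_optimal' order maxQ horder hlam prefs hnodup
end
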